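/- arXiv:1604.03774 — 8 statements merged into one kernel-verified Lean document; each statement's English description precedes it below -/
import Mathlib

section
/- Let A be a non-singular lower-triangular s×s matrix over the finite field F_q, and let C_1 ⊇ C_2 ⊇ ⋯ ⊇ C_s be a decreasing chain of linear codes of length n over F_q. Then the matrix-product code C = [C_1,…,C_s]A is an LCD code if and only if C_1,…,C_s are all LCD codes. -/
open Polynomial Matrix Finset

variable {F : Type*} [Field F]

/-- The minimum (Hamming) distance of a linear code `C ⊆ F^ι`:
the least Hamming weight of a nonzero codeword. -/
noncomputable def minDist {ι : Type*} [Fintype ι] [DecidableEq F]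
    (C : Submodule F (ι → F)) : ℕ :=
  sInf {d | ∃ x ∈ C, x ≠ 0 ∧ hammingNorm x = d}

/-- The Euclidean dual of a linear code. -/
def dualCode {ι : Type*} [Fintype ι] (C : Submodule F (ι → F)) :
    Submodule F (ι → F) where
  carrier := {a | ∀ b ∈ C, ∑ i, a i * b i = 0}
  add_mem' := by
    intro a b ha hb c hc
    simp only [Pi.add_apply, add_mul, Finset.sum_add_distrib,
      ha c hc, hb c hc, add_zero]
  zero_mem' := by
    intro b hb
    simp
  smul_mem' := by
    intro r a ha b hb
    simp only [Pi.smul_apply, smul_eq_mul, mul_assoc, ← Finset.mul_sum,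
      ha b hb, mul_zero]

/-- `C` is a linear complementary dual (LCD) code. -/
def IsLCD {ι : Type*} [Fintype ι] (C : Submodule F (ι → F)) : Prop :=
  C ⊓ dualCode C = ⊥

/-- The Hermitian dual (with respect to `⟨a,b⟩ = ∑ i, a i * (b i)^l`) of a linear code. -/
def hermitianDual (l : ℕ) {ι : Type*} [Fintype ι] (C : Submodule F (ι → F)) :
    Submodule F (ι → F) where
  carrier := {a | ∀ b ∈ C, ∑ i, a i * (b i) ^ l = 0}
  add_mem' := by
    intro a b ha hb c hc
    simp only [Pi.add_apply, add_mul, Finset.sum_add_distrib,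
      ha c hc, hb c hc, add_zero]
  zero_mem' := by
    intro b hb
    simp
  smul_mem' := by
    intro r a ha b hb
    simp only [Pi.smul_apply, smul_eq_mul, mul_assoc, ← Finset.mul_sum,
      ha b hb, mul_zero]

/-- `C` is a Hermitian linear complementary dual code. -/
def IsHermitianLCD (l : ℕ) {ι : Type*} [Fintype ι] (C : Submodule F (ι → F)) : Prop :=
  C ⊓ hermitianDual l C = ⊥

/-- The matrix-product code `[C_1, …, C_s]·A`: all concatenated vectors
`(∑ i a_{i1} c_i, …, ∑ i a_{im} c_i)` with `c_i ∈ C_i`; coordinates are indexed by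
`Fin m × Fin n` (block `j`, position `t` within block). -/
def matrixProductCode {s m n : ℕ} (A : Matrix (Fin s) (Fin m) F)
    (C : Fin s → Submodule F (Fin n → F)) :
    Submodule F (Fin m × Fin n → F) where
  carrier := {x | ∃ c : Fin s → (Fin n → F), (∀ i, c i ∈ C i) ∧
    x = fun p => ∑ i, A i p.1 * c i p.2}
  add_mem' := by
    rintro x y ⟨c, hc, rfl⟩ ⟨d, hd, rfl⟩
    refine ⟨fun i => c i + d i, fun i => (C i).add_mem (hc i) (hd i), ?_⟩
    funext p
    simp [mul_add, Finset.sum_add_distrib]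
  zero_mem' := ⟨0, fun i => (C i).zero_mem, by funext p; simp⟩
  smul_mem' := by
    rintro r x ⟨c, hc, rfl⟩
    refine ⟨fun i => r • c i, fun i => (C i).smul_mem r (hc i), ?_⟩
    funext p
    simp [Finset.mul_sum, mul_left_comm]

/-- A matrix is non-singular by columns (NSC) if, for every `t ≤ s` and every strictly
increasing choice of `t` columns, the `t × t` submatrix formed from the first `t` rows
and those columns is non-singular. -/
def NSC {s m : ℕ} (A : Matrix (Fin s) (Fin m) F) : Prop :=
  ∀ (t : ℕ) (ht : t ≤ s) (j : Fin t → Fin m), StrictMono j →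
    (Matrix.of fun a b : Fin t => A (Fin.castLE ht a) (j b)).det ≠ 0

/-- The cyclic code of length `n` with generator polynomial `g` (a divisor of `Xⁿ - 1`),
viewed in `F^n` via the coefficient identification: a word `c` lies in the code iff the
associated polynomial `∑ cᵢ Xⁱ` (of degree `< n`) is a multiple of `g`. -/
def cyclicCode (n : ℕ) (g : F[X]) : Submodule F (Fin n → F) where
  carrier := {c | g ∣ ∑ i : Fin n, Polynomial.C (c i) * Polynomial.X ^ (i : ℕ)}
  add_mem' := by
    intro a b ha hb
    have h : (∑ i : Fin n, Polynomial.C ((a + b) i) * Polynomial.X ^ (i : ℕ))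
        = (∑ i : Fin n, Polynomial.C (a i) * Polynomial.X ^ (i : ℕ))
          + (∑ i : Fin n, Polynomial.C (b i) * Polynomial.X ^ (i : ℕ)) := by
      simp [add_mul, Finset.sum_add_distrib]
    simp only [Set.mem_setOf_eq] at ha hb ⊢
    rw [h]
    exact dvd_add ha hb
  zero_mem' := by simp
  smul_mem' := by
    intro r a ha
    have h : (∑ i : Fin n, Polynomial.C ((r • a) i) * Polynomial.X ^ (i : ℕ))
        = Polynomial.C r * ∑ i : Fin n, Polynomial.C (a i) * Polynomial.X ^ (i : ℕ) := by
      simp [Finset.mul_sum, mul_assoc]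
    simp only [Set.mem_setOf_eq] at ha ⊢
    rw [h]
    exact ha.mul_left _

/-- The conjugate-reciprocal polynomial
`f^⊥(x) = a₀^{-l} (a_k^l + a_{k-1}^l x + ⋯ + a₀^l x^k)` of `f = a₀ + a₁ x + ⋯ + a_k x^k`. -/
noncomputable def conjReciprocal (l : ℕ) (f : F[X]) : F[X] :=
  Polynomial.C ((f.coeff 0 ^ l)⁻¹) *
    ∑ i ∈ Finset.range (f.natDegree + 1),
      Polynomial.C (f.coeff (f.natDegree - i) ^ l) * Polynomial.X ^ i


lemma mem_mpc_one {s n : ℕ} (C : Fin s → Submodule F (Fin n → F))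
    (x : Fin s × Fin n → F) :
    x ∈ matrixProductCode (1 : Matrix (Fin s) (Fin s) F) C ↔
      ∀ j, (fun t => x (j, t)) ∈ C j := by
  constructor
  · rintro ⟨c, hc, rfl⟩ j
    have h : (fun t => ∑ i, (1 : Matrix (Fin s) (Fin s) F) i j * c i t) = c j := by
      funext t
      simp [Matrix.one_apply, ite_mul]
    simpa [h] using hc j
  · intro h
    exact ⟨fun j t => x (j, t), h, by
      funext p
      simp [Matrix.one_apply, ite_mul]⟩

lemma mem_dual_mpc_one {s n : ℕ} (C : Fin s → Submodule F (Fin n → F))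
    (a : Fin s × Fin n → F) :
    a ∈ dualCode (matrixProductCode (1 : Matrix (Fin s) (Fin s) F) C) ↔
      ∀ j, (fun t => a (j, t)) ∈ dualCode (C j) := by
  constructor
  · intro ha j b hb
    have hmem : (fun p : Fin s × Fin n => if p.1 = j then b p.2 else 0)
        ∈ matrixProductCode (1 : Matrix (Fin s) (Fin s) F) C := by
      rw [mem_mpc_one]
      intro k
      by_cases hk : k = j
      · subst hk; simpa using hb
      · simp only [hk, ite_false]
        exact (C k).zero_mem
    have h := ha _ hmem
    rw [Fintype.sum_prod_type_right] at h
    simpa [mul_ite, Finset.sum_ite_eq'] using h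
  · intro h y hy
    rw [mem_mpc_one] at hy
    rw [Fintype.sum_prod_type]
    exact Finset.sum_eq_zero fun j _ => h j _ (hy j)

lemma isLCD_mpc_one {s n : ℕ} (C : Fin s → Submodule F (Fin n → F)) :
    IsLCD (matrixProductCode (1 : Matrix (Fin s) (Fin s) F) C) ↔ ∀ j, IsLCD (C j) := by
  unfold IsLCD
  simp only [Submodule.eq_bot_iff, Submodule.mem_inf]
  constructor
  · rintro h j x ⟨hx, hx'⟩
    have h1 : (fun p : Fin s × Fin n => if p.1 = j then x p.2 else 0)
        ∈ matrixProductCode (1 : Matrix (Fin s) (Fin s) F) C := by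
      rw [mem_mpc_one]
      intro k
      by_cases hk : k = j
      · subst hk; simpa using hx
      · simp only [hk, ite_false]
        exact (C k).zero_mem
    have h2 : (fun p : Fin s × Fin n => if p.1 = j then x p.2 else 0)
        ∈ dualCode (matrixProductCode (1 : Matrix (Fin s) (Fin s) F) C) := by
      rw [mem_dual_mpc_one]
      intro k
      by_cases hk : k = j
      · subst hk; simpa using hx'
      · simp only [hk, ite_false]
        exact (dualCode (C k)).zero_mem
    have h3 := h _ ⟨h1, h2⟩
    funext t
    have := congrFun h3 (j, t)
    simpa using this
  · rintro h x ⟨hx, hx'⟩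
    rw [mem_mpc_one] at hx
    rw [mem_dual_mpc_one] at hx'
    funext p
    have := congrFun (h p.1 _ ⟨hx p.1, hx' p.1⟩) p.2
    simpa using this

lemma mpc_eq_one {s n : ℕ} (A : Matrix (Fin s) (Fin s) F) (hA : IsUnit A.det)
    (hLT : ∀ i j : Fin s, (i : ℕ) < (j : ℕ) → A i j = 0)
    (C : Fin s → Submodule F (Fin n → F))
    (hchain : ∀ i j : Fin s, i ≤ j → C j ≤ C i) :
    matrixProductCode A C = matrixProductCode (1 : Matrix (Fin s) (Fin s) F) C := by
  have hInv : ∀ i j : Fin s, (i : ℕ) < (j : ℕ) → A⁻¹ i j = 0 := by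
    haveI := A.invertibleOfIsUnitDet hA
    haveI : Invertible Aᵀ := Aᵀ.invertibleOfIsUnitDet (by rwa [Matrix.det_transpose])
    have hBT : BlockTriangular Aᵀ (id : Fin s → Fin s) := fun i j h => hLT j i h
    have h2 := Matrix.blockTriangular_inv_of_blockTriangular hBT
    intro i j h
    have h3 := h2 (i := j) (j := i) h
    rwa [← Matrix.transpose_nonsing_inv, Matrix.transpose_apply] at h3
  apply le_antisymm
  · rintro x ⟨c, hc, rfl⟩
    rw [mem_mpc_one]
    intro j
    have heq : (fun t => ∑ i, A i j * c i t) = ∑ i, A i j • c i := by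
      funext t; simp
    show (fun t => ∑ i, A i j * c i t) ∈ C j
    rw [heq]
    refine Submodule.sum_mem _ fun i _ => ?_
    rcases le_or_gt j i with h | h
    · exact (C j).smul_mem _ (hchain j i h (hc i))
    · rw [hLT i j h, zero_smul]; exact (C j).zero_mem
  · intro x hx
    rw [mem_mpc_one] at hx
    refine ⟨fun i t => ∑ j, A⁻¹ j i * x (j, t), ?_, ?_⟩
    · intro i
      have heq : (fun t => ∑ j, A⁻¹ j i * x (j, t))
          = ∑ j, A⁻¹ j i • (fun t => x (j, t)) := by
        funext t; simp
      show (fun t => ∑ j, A⁻¹ j i * x (j, t)) ∈ C i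
      rw [heq]
      refine Submodule.sum_mem _ fun j _ => ?_
      rcases le_or_gt i j with h | h
      · exact (C i).smul_mem _ (hchain i j h (hx j))
      · rw [hInv j i h, zero_smul]; exact (C i).zero_mem
    · funext p
      have hAA : A⁻¹ * A = 1 := Matrix.nonsing_inv_mul A hA
      have key : ∑ i, A i p.1 * ∑ j, A⁻¹ j i * x (j, p.2)
          = ∑ j, (A⁻¹ * A) j p.1 * x (j, p.2) := by
        simp_rw [Matrix.mul_apply, Finset.mul_sum, Finset.sum_mul]
        rw [Finset.sum_comm]
        exact Finset.sum_congr rfl fun j _ => Finset.sum_congr rfl fun i _ => by ring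
      show x p = ∑ i, A i p.1 * ∑ j, A⁻¹ j i * x (j, p.2)
      rw [key, hAA]
      simp [Matrix.one_apply, ite_mul]

theorem stmt10 {F : Type*} [Field F] [Fintype F]
    {s n : ℕ} (A : Matrix (Fin s) (Fin s) F) (hA : IsUnit A.det)
    (hLT : ∀ i j : Fin s, (i : ℕ) < (j : ℕ) → A i j = 0)
    (C : Fin s → Submodule F (Fin n → F))
    (hchain : ∀ i j : Fin s, i ≤ j → C j ≤ C i) :
    IsLCD (matrixProductCode A C) ↔ ∀ i, IsLCD (C i) := by
  rw [mpc_eq_one A hA hLT C hchain, isLCD_mpc_one]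
end

section
/- Let l be a prime power, let C_1,…,C_s be linear codes of length n over F_{l^2}, and let A be an s×s matrix over F_{l^2} such that A^{(l)}·A^T is a diagonal matrix all of whose diagonal entries are nonzero, where A^{(l)} is obtained from A by raising every entry to the l-th power. Then the matrix-product code C = [C_1,…,C_s]A is a Hermitian LCD code if and only if C_1,…,C_s are all Hermitian LCD codes. -/
open Polynomial Matrix Finset

variable {F : Type*} [Field F]

theorem stmt11 {F : Type*} [Field F] [Fintype F] {l : ℕ} (hl : IsPrimePow l)
    (hcard : Fintype.card F = l ^ 2)
    {s n : ℕ} (A : Matrix (Fin s) (Fin s) F)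
    (hQO₁ : ∀ i j, i ≠ j → ((A.map (· ^ l)) * Aᵀ) i j = 0)
    (hQO₂ : ∀ i, ((A.map (· ^ l)) * Aᵀ) i i ≠ 0)
    (C : Fin s → Submodule F (Fin n → F)) :
    IsHermitianLCD l (matrixProductCode A C) ↔ ∀ i, IsHermitianLCD l (C i) := by
  -- Set-up: Frobenius additivity
  obtain ⟨p, m, hp, hm, rfl⟩ := hl
  have hp' : p.Prime := hp.nat_prime
  haveI := Fact.mk hp'
  obtain ⟨k, hqp, hc⟩ := FiniteField.card F (ringChar F)
  have hrc : ringChar F = p := by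
    have h1 : ringChar F ∣ p ^ (m * 2) := by
      rw [← pow_mul] at hcard
      rw [← hcard, hc]
      exact dvd_pow_self _ k.2.ne'
    exact (Nat.prime_dvd_prime_iff_eq hqp hp').mp (hqp.dvd_of_dvd_pow h1)
  haveI : CharP F p := hrc ▸ ringChar.charP F
  haveI : ExpChar F p := .prime hp'
  have hlpos : p ^ m ≠ 0 := pow_ne_zero _ hp'.pos.ne'
  have hsum : ∀ {ι : Type} [Fintype ι] (g : ι → F),
      (∑ i, g i) ^ p ^ m = ∑ i, (g i) ^ p ^ m := by
    intro ι _ g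
    have h := map_sum (iterateFrobenius F p m) g univ
    simp only [iterateFrobenius_def] at h
    exact h
  -- entry formula for the orthogonality hypotheses
  have hB : ∀ i j, ((A.map (· ^ p ^ m)) * Aᵀ) i j = ∑ t, (A i t) ^ p ^ m * A j t := by
    intro i j
    simp [Matrix.mul_apply, Matrix.map_apply, Matrix.transpose_apply]
  -- single-block codewords
  have hrep : ∀ (b : Fin n → F) (i : Fin s) (q : Fin s × Fin n),
      (∑ j, A j q.1 * (fun j : Fin s => if j = i then b else 0) j q.2) = A i q.1 * b q.2 := by
    intro b i q
    rw [Finset.sum_eq_single i (fun j _ hj => by simp [hj]) (fun h => absurd (mem_univ i) h)]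
    simp
  -- the key Hermitian inner-product computation for matrix-product words
  have key : ∀ (c d : Fin s → Fin n → F),
      ∑ q : Fin s × Fin n, (∑ j, A j q.1 * c j q.2) * (∑ j, A j q.1 * d j q.2) ^ p ^ m
      = ∑ k, ∑ j, (∑ u, (A j u) ^ p ^ m * A k u) * (∑ t, c k t * (d j t) ^ p ^ m) := by
    intro c d
    calc ∑ q : Fin s × Fin n, (∑ j, A j q.1 * c j q.2) * (∑ j, A j q.1 * d j q.2) ^ p ^ m
        = ∑ q : Fin s × Fin n, ∑ k, ∑ j,
            (A k q.1 * c k q.2) * ((A j q.1) ^ p ^ m * (d j q.2) ^ p ^ m) := by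
          refine Finset.sum_congr rfl fun q _ => ?_
          rw [hsum, Finset.sum_mul_sum]
          exact Finset.sum_congr rfl fun k _ => Finset.sum_congr rfl fun j _ => by
            rw [mul_pow]
      _ = ∑ k, ∑ j, ∑ q : Fin s × Fin n,
            (A k q.1 * c k q.2) * ((A j q.1) ^ p ^ m * (d j q.2) ^ p ^ m) := by
          rw [Finset.sum_comm]
          exact Finset.sum_congr rfl fun k _ => Finset.sum_comm
      _ = ∑ k, ∑ j, (∑ u, (A j u) ^ p ^ m * A k u) * (∑ t, c k t * (d j t) ^ p ^ m) := by
          refine Finset.sum_congr rfl fun k _ => Finset.sum_congr rfl fun j _ => ?_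
          rw [Finset.sum_mul_sum, Fintype.sum_prod_type]
          exact Finset.sum_congr rfl fun u _ => Finset.sum_congr rfl fun t _ => by ring
  constructor
  · -- MP LCD → each C i LCD
    intro hMP i
    rw [IsHermitianLCD, eq_bot_iff]
    rintro c ⟨hc1, hc2⟩
    set c' : Fin s → Fin n → F := fun j => if j = i then c else 0 with hc'def
    set x : Fin s × Fin n → F := fun q => ∑ j, A j q.1 * c' j q.2 with hxdef
    have hxMP : x ∈ matrixProductCode A C := by
      refine ⟨c', fun j => ?_, rfl⟩
      by_cases h : j = i
      · subst h; simpa [hc'def] using hc1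
      · simp [hc'def, h]
    have hxD : x ∈ hermitianDual (p ^ m) (matrixProductCode A C) := by
      rintro y ⟨d, hd, rfl⟩
      rw [hxdef]
      rw [key c' d]
      rw [Finset.sum_eq_single i (fun k _ hk => Finset.sum_eq_zero fun j _ => by
          have hz : (∑ t, c' k t * (d j t) ^ p ^ m) = 0 :=
            Finset.sum_eq_zero fun t _ => by simp [hc'def, hk]
          rw [hz, mul_zero]) (fun h => absurd (mem_univ i) h)]
      refine Finset.sum_eq_zero fun j _ => ?_
      by_cases h : j = i
      · rw [h]
        have hz : (∑ t, c' i t * (d i t) ^ p ^ m) = 0 := by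
          simpa [hc'def] using hc2 (d i) (hd i)
        rw [hz, mul_zero]
      · rw [← hB, hQO₁ j i h, zero_mul]
    have hx0 : x = 0 := by
      have := hMP ▸ (Submodule.mem_inf.mpr ⟨hxMP, hxD⟩)
      simpa using this
    -- row i of A is nonzero
    obtain ⟨u, hu⟩ : ∃ u, A i u ≠ 0 := by
      by_contra h
      push_neg at h
      apply hQO₂ i
      rw [hB]
      exact Finset.sum_eq_zero fun t _ => by rw [h t, mul_zero]
    simp only [Submodule.mem_bot]
    funext t
    show c t = 0
    have hxval := hrep c i (u, t)
    rw [← hc'def] at hxval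
    have h0 : (∑ j, A j (u, t).1 * c' j (u, t).2) = 0 := by
      have := congrFun hx0 (u, t)
      simpa [hxdef] using this
    rw [h0] at hxval
    exact (mul_eq_zero.mp hxval.symm).resolve_left hu
  · -- each C i LCD → MP LCD
    intro hC
    rw [IsHermitianLCD, eq_bot_iff]
    rintro x ⟨hx1, hx2⟩
    obtain ⟨c, hc, rfl⟩ := hx1
    have hci : ∀ i, c i = 0 := by
      intro i
      have hmem : c i ∈ C i ⊓ hermitianDual (p ^ m) (C i) := by
        refine ⟨hc i, ?_⟩
        intro b hb
        set d' : Fin s → Fin n → F := fun j => if j = i then b else 0 with hd'def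
        have hyMP : (fun q : Fin s × Fin n => ∑ j, A j q.1 * d' j q.2)
            ∈ matrixProductCode A C := by
          refine ⟨d', fun j => ?_, rfl⟩
          by_cases h : j = i
          · subst h; simpa [hd'def] using hb
          · simp [hd'def, h]
        have htot := hx2 _ hyMP
        rw [key c d'] at htot
        -- collapse the inner (j) sum to j = i
        have hinner : ∀ k, (∑ j, (∑ u, (A j u) ^ p ^ m * A k u) *
            (∑ t, c k t * (d' j t) ^ p ^ m))
            = (∑ u, (A i u) ^ p ^ m * A k u) * (∑ t, c k t * (b t) ^ p ^ m) := by
          intro k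
          rw [Finset.sum_eq_single i (fun j _ hj => ?_) (fun h => absurd (mem_univ i) h)]
          · simp [hd'def]
          · have hz : (∑ t, c k t * (d' j t) ^ p ^ m) = 0 :=
              Finset.sum_eq_zero fun t _ => by
                simp [hd'def, hj, zero_pow hlpos]
            rw [hz, mul_zero]
        simp only [hinner] at htot
        rw [Finset.sum_eq_single i (fun k _ hk => by
            rw [← hB, hQO₁ i k (Ne.symm hk), zero_mul])
          (fun h => absurd (mem_univ i) h)] at htot
        have hBii : ((A.map (· ^ p ^ m)) * Aᵀ) i i ≠ 0 := hQO₂ i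
        rw [hB] at hBii
        exact (mul_eq_zero.mp htot).resolve_left hBii
      have := hC i ▸ hmem
      simpa using this
    simp only [Submodule.mem_bot]
    funext q
    simp [hci]
end

section
/- Let l be a prime power, let A be a non-singular lower-triangular s×s matrix over F_{l^2}, and let C_1 ⊇ C_2 ⊇ ⋯ ⊇ C_s be a decreasing chain of linear codes of length n over F_{l^2}. Then the matrix-product code C = [C_1,…,C_s]A is a Hermitian LCD code if and only if C_1,…,C_s are all Hermitian LCD codes. -/
open Polynomial Matrix Finset

variable {F : Type*} [Field F]

lemma mem_hermitianDual_iff {l : ℕ} {ι : Type*} [Fintype ι] {C : Submodule F (ι → F)}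
    {a : ι → F} : a ∈ hermitianDual l C ↔ ∀ b ∈ C, ∑ i, a i * (b i) ^ l = 0 := Iff.rfl

lemma tri_inv_aux {s : ℕ} (A : Matrix (Fin s) (Fin s) F) (hA : IsUnit A.det)
    (hLT : ∀ i j : Fin s, (i : ℕ) < (j : ℕ) → A i j = 0) :
    ∀ i j : Fin s, (i : ℕ) < (j : ℕ) → A⁻¹ i j = 0 := by
  haveI := A.invertibleOfIsUnitDet hA
  have htri : A.BlockTriangular (fun i => OrderDual.toDual (i : ℕ)) := by
    intro i j h
    exact hLT i j (by simpa using h)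
  intro i j h
  exact Matrix.blockTriangular_inv_of_blockTriangular htri (by simpa using h)

lemma mpc_mem_iff {s n : ℕ} (A : Matrix (Fin s) (Fin s) F) (hA : IsUnit A.det)
    (hLT : ∀ i j : Fin s, (i : ℕ) < (j : ℕ) → A i j = 0)
    (C : Fin s → Submodule F (Fin n → F))
    (hchain : ∀ i j : Fin s, i ≤ j → C j ≤ C i)
    (x : Fin s × Fin n → F) :
    x ∈ matrixProductCode A C ↔ ∀ j, (fun t => x (j, t)) ∈ C j := by
  constructor
  · rintro ⟨c, hc, rfl⟩ j
    have h : (fun t => ∑ i, A i j * c i t) = ∑ i, A i j • c i := by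
      funext t; simp [Finset.sum_apply]
    simp only [h]
    refine Submodule.sum_mem _ fun i _ => ?_
    rcases lt_or_ge (i : ℕ) (j : ℕ) with h' | h'
    · rw [hLT i j h']; simpa using (C j).zero_mem
    · exact Submodule.smul_mem _ _ (hchain j i (Fin.le_def.mpr h') (hc i))
  · intro hx
    refine ⟨fun i => fun t => ∑ j, A⁻¹ j i * x (j, t), fun i => ?_, ?_⟩
    · show (fun t => ∑ j, A⁻¹ j i * x (j, t)) ∈ C i
      have h : (fun t => ∑ j, A⁻¹ j i * x (j, t)) = ∑ j, A⁻¹ j i • (fun t => x (j, t)) := by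
        funext t; simp [Finset.sum_apply]
      rw [h]
      refine Submodule.sum_mem _ fun j _ => ?_
      rcases lt_or_ge (j : ℕ) (i : ℕ) with h' | h'
      · rw [tri_inv_aux A hA hLT j i h']; simpa using (C i).zero_mem
      · exact Submodule.smul_mem _ _ (hchain i j (Fin.le_def.mpr h') (hx j))
    · funext p
      obtain ⟨k, t⟩ := p
      have h1 : ∀ i, A i k * (∑ j, A⁻¹ j i * x (j, t)) = ∑ j, A⁻¹ j i * A i k * x (j, t) := by
        intro i; rw [Finset.mul_sum]; exact Finset.sum_congr rfl fun j _ => by ring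
      simp only [h1]
      rw [Finset.sum_comm]
      have h2 : ∀ j, ∑ i, A⁻¹ j i * A i k * x (j, t) = (A⁻¹ * A) j k * x (j, t) := by
        intro j; rw [Matrix.mul_apply, Finset.sum_mul]
      simp only [h2, Matrix.nonsing_inv_mul A hA, Matrix.one_apply]
      simp

theorem stmt12 {F : Type*} [Field F] [Fintype F] {l : ℕ} (hl : IsPrimePow l)
    (hcard : Fintype.card F = l ^ 2)
    {s n : ℕ} (A : Matrix (Fin s) (Fin s) F) (hA : IsUnit A.det)
    (hLT : ∀ i j : Fin s, (i : ℕ) < (j : ℕ) → A i j = 0)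
    (C : Fin s → Submodule F (Fin n → F))
    (hchain : ∀ i j : Fin s, i ≤ j → C j ≤ C i) :
    IsHermitianLCD l (matrixProductCode A C) ↔ ∀ i, IsHermitianLCD l (C i) := by
  have hl0 : l ≠ 0 := hl.pos.ne'
  have hmem : ∀ x, x ∈ matrixProductCode A C ↔ ∀ j, (fun t => x (j, t)) ∈ C j :=
    mpc_mem_iff A hA hLT C hchain
  constructor
  · intro hLCD i
    rw [IsHermitianLCD, Submodule.eq_bot_iff]
    intro b hb
    obtain ⟨hb1, hb2⟩ := Submodule.mem_inf.mp hb
    set x : Fin s × Fin n → F := fun p => if p.1 = i then b p.2 else 0 with hxdef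
    have hxC : x ∈ matrixProductCode A C := (hmem x).mpr fun j => by
      by_cases h : j = i
      · subst h; simpa [hxdef] using hb1
      · have h0 : (fun t => x (j, t)) = (0 : Fin n → F) := by
          funext t; simp [hxdef, h]
        rw [h0]; exact (C j).zero_mem
    have hxD : x ∈ hermitianDual l (matrixProductCode A C) := by
      rw [mem_hermitianDual_iff]
      intro y hy
      have hy' := (hmem y).mp hy
      rw [Fintype.sum_prod_type]
      have key : ∀ j' : Fin s, ∀ t, x (j', t) * y (j', t) ^ l
          = if j' = i then b t * y (j', t) ^ l else 0 := by
        intro j' t; simp only [hxdef]; split <;> simp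
      simp only [key]
      simp only [Finset.sum_ite_irrel, Finset.sum_const_zero, Finset.sum_ite_eq',
        Finset.mem_univ, if_true]
      exact hb2 (fun t => y (i, t)) (hy' i)
    have hx0 : x = 0 := by
      rw [IsHermitianLCD] at hLCD
      have : x ∈ (⊥ : Submodule F (Fin s × Fin n → F)) :=
        hLCD ▸ Submodule.mem_inf.mpr ⟨hxC, hxD⟩
      simpa using this
    funext t
    have := congrFun hx0 (i, t)
    simpa [hxdef] using this
  · intro hall
    rw [IsHermitianLCD, Submodule.eq_bot_iff]
    intro x hx
    obtain ⟨hx1, hx2⟩ := Submodule.mem_inf.mp hx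
    have hb1 := (hmem x).mp hx1
    have hbd : ∀ j, (fun t => x (j, t)) ∈ hermitianDual l (C j) := by
      intro j
      rw [mem_hermitianDual_iff]
      intro b hb
      set y : Fin s × Fin n → F := fun p => if p.1 = j then b p.2 else 0 with hydef
      have hyC : y ∈ matrixProductCode A C := (hmem y).mpr fun j' => by
        by_cases h : j' = j
        · subst h; simpa [hydef] using hb
        · have h0 : (fun t => y (j', t)) = (0 : Fin n → F) := by
            funext t; simp [hydef, h]
          rw [h0]; exact (C j').zero_mem
      have h0 := (mem_hermitianDual_iff.mp hx2) y hyC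
      rw [Fintype.sum_prod_type] at h0
      have key : ∀ j' : Fin s, ∀ t, x (j', t) * y (j', t) ^ l
          = if j' = j then x (j', t) * b t ^ l else 0 := by
        intro j' t; simp only [hydef]; split <;> simp [zero_pow hl0]
      simp only [key, Finset.sum_ite_irrel, Finset.sum_const_zero, Finset.sum_ite_eq',
        Finset.mem_univ, if_true] at h0
      exact h0
    have hblock0 : ∀ j, (fun t => x (j, t)) = 0 := by
      intro j
      have : (fun t => x (j, t)) ∈ (⊥ : Submodule F (Fin n → F)) :=
        (hall j) ▸ Submodule.mem_inf.mpr ⟨hb1 j, hbd j⟩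
      simpa using this
    funext p
    obtain ⟨j, t⟩ := p
    exact congrFun (hblock0 j) t
end

section
/- Let F_q have odd characteristic p, and let C be an LCD [n,k,d] code over F_q. Then the matrix-product code M = [C, C]·A with A = ((1,1),(1,p−1)) is an LCD code over F_q of length 2n, dimension 2k, and minimum distance at least d. (Indeed, (A^{−1})^T = (1/2)·A, so A is quasi-orthogonal.) -/
open Polynomial Matrix Finset

variable {F : Type*} [Field F]

section MPCAux

variable {F : Type*} [Field F]

/-- The map `(u, v) ↦ (u + v, u - v)` into `F^{2n}` (blocks indexed by `Fin 2`). -/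
def Lmap (n : ℕ) : ((Fin n → F) × (Fin n → F)) →ₗ[F] (Fin 2 × Fin n → F) where
  toFun uv := fun q => uv.1 q.2 + (if q.1 = 0 then uv.2 q.2 else - uv.2 q.2)
  map_add' a b := by
    funext q
    by_cases h : q.1 = 0 <;> simp [h] <;> ring
  map_smul' r a := by
    funext q
    by_cases h : q.1 = 0 <;> simp [h] <;> ring

lemma Lmap_apply_zero {n : ℕ} (u v : Fin n → F) (t : Fin n) :
    Lmap n (u, v) (0, t) = u t + v t := by simp [Lmap]

lemma Lmap_apply_one {n : ℕ} (u v : Fin n → F) (t : Fin n) :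
    Lmap n (u, v) (1, t) = u t - v t := by
  simp [Lmap, Fin.one_eq_zero_iff, sub_eq_add_neg]

lemma mpc_sum_eq {p : ℕ} [CharP F p] {n : ℕ} (c : Fin 2 → Fin n → F) :
    (fun q : Fin 2 × Fin n => ∑ i, (!![(1 : F), 1; 1, (p : F) - 1]) i q.1 * c i q.2)
      = Lmap n (c 0, c 1) := by
  have hp : (p : F) = 0 := CharP.cast_eq_zero F p
  funext q
  obtain ⟨j, t⟩ := q
  fin_cases j <;>
    simp [Lmap, Fin.sum_univ_two, hp, Fin.one_eq_zero_iff] <;> ring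

lemma mem_mpc_iff {p : ℕ} [CharP F p] {n : ℕ} (C : Submodule F (Fin n → F))
    (x : Fin 2 × Fin n → F) :
    x ∈ matrixProductCode (!![(1 : F), 1; 1, (p : F) - 1]) (fun _ : Fin 2 => C) ↔
      ∃ u ∈ C, ∃ v ∈ C, x = Lmap n (u, v) := by
  constructor
  · rintro ⟨c, hc, rfl⟩
    exact ⟨c 0, hc 0, c 1, hc 1, mpc_sum_eq c⟩
  · rintro ⟨u, hu, v, hv, rfl⟩
    refine ⟨![u, v], by intro i; fin_cases i <;> simpa, ?_⟩
    rw [mpc_sum_eq]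
    simp

lemma Lmap_injective {n : ℕ} (h2 : (2 : F) ≠ 0) : Function.Injective (Lmap (F := F) n) := by
  rw [injective_iff_map_eq_zero]
  rintro ⟨u, v⟩ h
  have h0 : ∀ t, u t + v t = 0 := fun t => by
    have := congrFun h ((0 : Fin 2), t); rwa [Lmap_apply_zero] at this
  have h1 : ∀ t, u t - v t = 0 := fun t => by
    have := congrFun h ((1 : Fin 2), t); rwa [Lmap_apply_one] at this
  have hu : u = 0 := by
    funext t
    have : (2 : F) * u t = 0 := by
      have := h0 t; have := h1 t; ring_nf; linear_combination h0 t + h1 t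
    exact (mul_eq_zero.mp this).resolve_left h2
  have hv : v = 0 := by
    funext t
    have : (2 : F) * v t = 0 := by linear_combination h0 t - h1 t
    exact (mul_eq_zero.mp this).resolve_left h2
  simp [hu, hv, Prod.ext_iff]

lemma mpc_pairing {n : ℕ} (u v e f : Fin n → F) :
    ∑ q : Fin 2 × Fin n, Lmap n (u, v) q * Lmap n (e, f) q
      = 2 * (∑ t, u t * e t) + 2 * (∑ t, v t * f t) := by
  rw [Fintype.sum_prod_type, Fin.sum_univ_two]
  simp only [Lmap_apply_zero, Lmap_apply_one]
  rw [Finset.mul_sum, Finset.mul_sum, ← Finset.sum_add_distrib, ← Finset.sum_add_distrib]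
  exact Finset.sum_congr rfl fun t _ => by ring

lemma hammingNorm_block_le {n : ℕ} [DecidableEq F] (x : Fin 2 × Fin n → F) (j : Fin 2) :
    hammingNorm (fun t => x (j, t)) ≤ hammingNorm x := by
  classical
  unfold hammingNorm
  apply Finset.card_le_card_of_injOn (fun t => (j, t))
  · intro t ht
    simp only [Finset.mem_coe, Finset.mem_filter, Finset.mem_univ, true_and] at ht ⊢
    exact ht
  · intro a _ b _ hab
    exact (Prod.ext_iff.mp hab).2

end MPCAux

theorem stmt13 {F : Type*} [Field F] [Fintype F] [DecidableEq F]
    {p : ℕ} (hp : p.Prime) (hodd : p ≠ 2) [CharP F p]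
    {n : ℕ} (C : Submodule F (Fin n → F)) (k d : ℕ)
    (hLCD : IsLCD C) (hk : Module.finrank F C = k) (hd : minDist C = d) :
    IsLCD (matrixProductCode (!![1, 1; 1, (p : F) - 1]) (fun _ : Fin 2 => C)) ∧
    Module.finrank F
        (matrixProductCode (!![1, 1; 1, (p : F) - 1]) (fun _ : Fin 2 => C)) = 2 * k ∧
    d ≤ minDist (matrixProductCode (!![1, 1; 1, (p : F) - 1]) (fun _ : Fin 2 => C)) := by
  classical
  have h2 : (2 : F) ≠ 0 := by
    intro h
    have hdvd : p ∣ 2 := (CharP.cast_eq_zero_iff F p 2).mp (by exact_mod_cast h)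
    exact hodd ((Nat.prime_dvd_prime_iff_eq hp Nat.prime_two).mp hdvd)
  have hinj : Function.Injective (Lmap (F := F) n) := Lmap_injective h2
  set M := matrixProductCode (!![(1 : F), 1; 1, (p : F) - 1]) (fun _ : Fin 2 => C) with hM
  refine ⟨?_, ?_, ?_⟩
  · -- LCD
    rw [IsLCD, Submodule.eq_bot_iff]
    intro x hx
    rw [Submodule.mem_inf] at hx
    obtain ⟨hxM, hxD⟩ := hx
    obtain ⟨u, hu, v, hv, rfl⟩ := (mem_mpc_iff C x).mp hxM
    have hxD' : ∀ b ∈ M, ∑ q, Lmap n (u, v) q * b q = 0 := hxD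
    have key : ∀ w e : Fin n → F, w ∈ C → e ∈ C →
        (∀ f ∈ C, ∑ t, w t * f t = 0) → w = 0 → True := fun _ _ _ _ _ _ => trivial
    have hu0 : u = 0 := by
      have hmem : u ∈ C ⊓ dualCode C := by
        refine Submodule.mem_inf.mpr ⟨hu, ?_⟩
        intro e he
        have hb : Lmap n (e, 0) ∈ M :=
          (mem_mpc_iff C _).mpr ⟨e, he, 0, C.zero_mem, rfl⟩
        have h0 := hxD' _ hb
        rw [mpc_pairing] at h0
        simp only [Pi.zero_apply, mul_zero, Finset.sum_const_zero, add_zero] at h0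
        exact (mul_eq_zero.mp h0).resolve_left h2
      rw [hLCD, Submodule.mem_bot] at hmem
      exact hmem
    have hv0 : v = 0 := by
      have hmem : v ∈ C ⊓ dualCode C := by
        refine Submodule.mem_inf.mpr ⟨hv, ?_⟩
        intro e he
        have hb : Lmap n (0, e) ∈ M :=
          (mem_mpc_iff C _).mpr ⟨0, C.zero_mem, e, he, rfl⟩
        have h0 := hxD' _ hb
        rw [mpc_pairing] at h0
        simp only [Pi.zero_apply, mul_zero, zero_mul, Finset.sum_const_zero,
          zero_add, mul_zero] at h0
        exact (mul_eq_zero.mp h0).resolve_left h2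
      rw [hLCD, Submodule.mem_bot] at hmem
      exact hmem
    rw [hu0, hv0, show ((0 : Fin n → F), (0 : Fin n → F)) = 0 from rfl, map_zero]
  · -- dimension
    have hrange : M = LinearMap.range
        ((Lmap n).comp ((C.subtype).prodMap (C.subtype))) := by
      ext x
      rw [mem_mpc_iff]
      constructor
      · rintro ⟨u, hu, v, hv, rfl⟩
        exact ⟨(⟨u, hu⟩, ⟨v, hv⟩), rfl⟩
      · rintro ⟨⟨⟨u, hu⟩, ⟨v, hv⟩⟩, rfl⟩
        exact ⟨u, hu, v, hv, rfl⟩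
    have hginj : Function.Injective
        ((Lmap n).comp ((C.subtype).prodMap (C.subtype)) :
          (↥C × ↥C) →ₗ[F] (Fin 2 × Fin n → F)) := by
      rw [LinearMap.coe_comp, LinearMap.coe_prodMap]
      exact hinj.comp (Subtype.val_injective.prodMap Subtype.val_injective)
    rw [hrange, LinearMap.finrank_range_of_inj hginj, Module.finrank_prod, hk, two_mul]
  · -- minimum distance
    rw [← hd]
    unfold minDist
    by_cases hC : ∃ u, u ∈ C ∧ u ≠ 0
    · obtain ⟨u, hu, hu0⟩ := hC
      have hxM : Lmap n (u, 0) ∈ M :=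
        (mem_mpc_iff C _).mpr ⟨u, hu, 0, C.zero_mem, rfl⟩
      have hx0 : Lmap n (u, 0) ≠ 0 := by
        intro h
        apply hu0
        have h' : ((u, 0) : (Fin n → F) × (Fin n → F)) = 0 := hinj (by rw [h, map_zero])
        exact congrArg Prod.fst h'
      refine le_csInf ⟨hammingNorm (Lmap n (u, 0)), Lmap n (u, 0), hxM, hx0, rfl⟩ ?_
      rintro w ⟨x, hxM', hx0', rfl⟩
      obtain ⟨c1, hc1, c2, hc2, rfl⟩ := (mem_mpc_iff C _).mp hxM'
      by_cases hblock : (fun t => Lmap n (c1, c2) (0, t)) = 0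
      · have h1 : (fun t => Lmap n (c1, c2) ((1 : Fin 2), t)) ≠ 0 := by
          intro h
          apply hx0'
          funext q
          obtain ⟨j, t⟩ := q
          fin_cases j
          · exact congrFun hblock t
          · exact congrFun h t
        have hmem : (fun t => Lmap n (c1, c2) ((1 : Fin 2), t)) ∈ C := by
          have he : (fun t => Lmap n (c1, c2) ((1 : Fin 2), t)) = c1 - c2 := by
            funext t; rw [Lmap_apply_one]; rfl
          rw [he]; exact C.sub_mem hc1 hc2
        calc sInf {d | ∃ x ∈ C, x ≠ 0 ∧ hammingNorm x = d}
              ≤ hammingNorm (fun t => Lmap n (c1, c2) ((1 : Fin 2), t)) :=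
              Nat.sInf_le ⟨_, hmem, h1, rfl⟩
          _ ≤ hammingNorm (Lmap n (c1, c2)) := hammingNorm_block_le _ _
      · have hmem : (fun t => Lmap n (c1, c2) ((0 : Fin 2), t)) ∈ C := by
          have he : (fun t => Lmap n (c1, c2) ((0 : Fin 2), t)) = c1 + c2 := by
            funext t; rw [Lmap_apply_zero]; rfl
          rw [he]; exact C.add_mem hc1 hc2
        calc sInf {d | ∃ x ∈ C, x ≠ 0 ∧ hammingNorm x = d}
              ≤ hammingNorm (fun t => Lmap n (c1, c2) ((0 : Fin 2), t)) :=
              Nat.sInf_le ⟨_, hmem, hblock, rfl⟩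
          _ ≤ hammingNorm (Lmap n (c1, c2)) := hammingNorm_block_le _ _
    · have hempty : {d | ∃ x ∈ C, x ≠ 0 ∧ hammingNorm x = d} = ∅ := by
        rw [Set.eq_empty_iff_forall_notMem]
        rintro w ⟨x, hx, hx0, _⟩
        exact hC ⟨x, hx, hx0⟩
      rw [hempty, Nat.sInf_empty]
      exact Nat.zero_le _
end

section
/- Let F_q have characteristic 2 (q = 2^m), and let C be an LCD [n,k,d] code over F_q. Then the matrix-product code M = [C, C]·A with A = ((1,1),(0,1)) is an LCD code over F_q of length 2n, dimension 2k, and minimum distance exactly d. -/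
open Polynomial Matrix Finset

variable {F : Type*} [Field F]

section Aux

variable {F : Type*} [Field F]

lemma mem_MP {n : ℕ} (C : Submodule F (Fin n → F)) (x : Fin 2 × Fin n → F) :
    x ∈ matrixProductCode (!![1, 1; 0, 1] : Matrix (Fin 2) (Fin 2) F) (fun _ : Fin 2 => C) ↔
      (fun t => x (0, t)) ∈ C ∧ (fun t => x (1, t)) ∈ C := by
  constructor
  · rintro ⟨c, hc, rfl⟩
    constructor
    · have : (fun t => ∑ i, (!![1, 1; 0, 1] : Matrix (Fin 2) (Fin 2) F) i 0 * c i t)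
          = c 0 := by
        funext t
        simp [Fin.sum_univ_two]
      simpa [this] using hc 0
    · have h2 : (fun t => ∑ i, (!![1, 1; 0, 1] : Matrix (Fin 2) (Fin 2) F) i 1 * c i t)
          = c 0 + c 1 := by
        funext t
        simp [Fin.sum_univ_two]
      show (fun t => ∑ i, (!![1, 1; 0, 1] : Matrix (Fin 2) (Fin 2) F) i 1 * c i t) ∈ C
      rw [h2]
      exact C.add_mem (hc 0) (hc 1)
  · rintro ⟨h0, h1⟩
    refine ⟨![fun t => x (0, t), fun t => x (1, t) - x (0, t)], ?_, ?_⟩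
    · intro i
      fin_cases i
      · exact h0
      · exact C.sub_mem h1 h0
    · funext p
      obtain ⟨j, t⟩ := p
      fin_cases j <;> simp [Fin.sum_univ_two]

lemma embed_mem_MP {n : ℕ} (C : Submodule F (Fin n → F)) {a b : Fin n → F}
    (ha : a ∈ C) (hb : b ∈ C) :
    (fun p : Fin 2 × Fin n => if p.1 = 0 then a p.2 else b p.2) ∈
      matrixProductCode (!![1, 1; 0, 1] : Matrix (Fin 2) (Fin 2) F) (fun _ : Fin 2 => C) := by
  rw [mem_MP]
  constructor
  · simpa using ha
  · simpa using hb

lemma hn_split [DecidableEq F] {n : ℕ} (x : Fin 2 × Fin n → F) :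
    hammingNorm x = hammingNorm (fun t => x (0, t)) + hammingNorm (fun t => x (1, t)) := by
  simp only [hammingNorm, Finset.card_filter]
  rw [Fintype.sum_prod_type, Fin.sum_univ_two]

lemma eq_zero_of_comps {n : ℕ} (x : Fin 2 × Fin n → F)
    (h0 : (fun t => x (0, t)) = 0) (h1 : (fun t => x (1, t)) = 0) : x = 0 := by
  funext p
  obtain ⟨j, t⟩ := p
  fin_cases j
  · exact congrFun h0 t
  · exact congrFun h1 t

end Aux

theorem stmt14 {F : Type*} [Field F] [Fintype F] [DecidableEq F]
    [CharP F 2]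
    {n : ℕ} (C : Submodule F (Fin n → F)) (k d : ℕ)
    (hLCD : IsLCD C) (hk : Module.finrank F C = k) (hd : minDist C = d) :
    IsLCD (matrixProductCode (!![1, 1; 0, 1] : Matrix (Fin 2) (Fin 2) F)
        (fun _ : Fin 2 => C)) ∧
    Module.finrank F
        (matrixProductCode (!![1, 1; 0, 1] : Matrix (Fin 2) (Fin 2) F)
          (fun _ : Fin 2 => C)) = 2 * k ∧
    minDist (matrixProductCode (!![1, 1; 0, 1] : Matrix (Fin 2) (Fin 2) F)
        (fun _ : Fin 2 => C)) = d := by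
  set M := matrixProductCode (!![1, 1; 0, 1] : Matrix (Fin 2) (Fin 2) F)
      (fun _ : Fin 2 => C) with hM
  -- Part 1 : LCD
  have hLCD' : IsLCD M := by
    rw [IsLCD, eq_bot_iff]
    intro x hx
    obtain ⟨hxM, hxD⟩ := Submodule.mem_inf.mp hx
    obtain ⟨hc0, hc1⟩ := (mem_MP C x).1 hxM
    have d0 : (fun t => x (0, t)) ∈ dualCode C := by
      intro c hc
      have hb := hxD _ (embed_mem_MP C hc C.zero_mem)
      rw [Fintype.sum_prod_type, Fin.sum_univ_two] at hb
      simpa using hb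
    have d1 : (fun t => x (1, t)) ∈ dualCode C := by
      intro c hc
      have hb := hxD _ (embed_mem_MP C C.zero_mem hc)
      rw [Fintype.sum_prod_type, Fin.sum_univ_two] at hb
      simpa using hb
    have z0 : (fun t => x (0, t)) = 0 := by
      have := hLCD ▸ Submodule.mem_inf.mpr ⟨hc0, d0⟩
      simpa using this
    have z1 : (fun t => x (1, t)) = 0 := by
      have := hLCD ▸ Submodule.mem_inf.mpr ⟨hc1, d1⟩
      simpa using this
    simpa using eq_zero_of_comps x z0 z1
  refine ⟨hLCD', ?_, ?_⟩
  -- Part 2 : dimension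
  · let e : M ≃ₗ[F] C × C :=
      { toFun := fun x => (⟨fun t => x.1 (0, t), ((mem_MP C x.1).1 x.2).1⟩,
          ⟨fun t => x.1 (1, t), ((mem_MP C x.1).1 x.2).2⟩)
        invFun := fun ab => ⟨fun p => if p.1 = 0 then ab.1.1 p.2 else ab.2.1 p.2,
          embed_mem_MP C ab.1.2 ab.2.2⟩
        map_add' := fun x y => rfl
        map_smul' := fun r x => rfl
        left_inv := by
          rintro ⟨x, hx⟩
          ext p
          obtain ⟨j, t⟩ := p
          fin_cases j <;> simp
        right_inv := by
          rintro ⟨⟨a, ha⟩, ⟨b, hb⟩⟩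
          ext t <;> simp }
    rw [e.finrank_eq, Module.finrank_prod, hk, two_mul]
  -- Part 3 : minimum distance
  · rw [← hd]
    unfold minDist
    have hsub : {w | ∃ x ∈ C, x ≠ 0 ∧ hammingNorm x = w} ⊆
        {w | ∃ x ∈ M, x ≠ 0 ∧ hammingNorm x = w} := by
      rintro w ⟨x, hxC, hx0, rfl⟩
      refine ⟨fun p : Fin 2 × Fin n => if p.1 = 0 then x p.2 else (0 : F),
        embed_mem_MP C hxC C.zero_mem, ?_, ?_⟩
      · intro h
        apply hx0
        funext t
        simpa using congrFun h (0, t)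
      · rw [hn_split]
        simp [hammingNorm]
    have hdown : ∀ w ∈ {w | ∃ x ∈ M, x ≠ 0 ∧ hammingNorm x = w},
        ∃ w' ∈ {w | ∃ x ∈ C, x ≠ 0 ∧ hammingNorm x = w}, w' ≤ w := by
      rintro w ⟨x, hxM, hx0, rfl⟩
      obtain ⟨hc0, hc1⟩ := (mem_MP C x).1 hxM
      have hor : (fun t => x (0, t)) ≠ 0 ∨ (fun t => x (1, t)) ≠ 0 := by
        by_contra h
        push_neg at h
        exact hx0 (eq_zero_of_comps x h.1 h.2)
      rcases hor with h | h
      · exact ⟨hammingNorm (fun t => x (0, t)), ⟨_, hc0, h, rfl⟩,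
          by rw [hn_split]; exact Nat.le_add_right _ _⟩
      · exact ⟨hammingNorm (fun t => x (1, t)), ⟨_, hc1, h, rfl⟩,
          by rw [hn_split]; exact Nat.le_add_left _ _⟩
    rcases Set.eq_empty_or_nonempty {w | ∃ x ∈ C, x ≠ 0 ∧ hammingNorm x = w} with he | hne
    · have hMe : {w | ∃ x ∈ M, x ≠ 0 ∧ hammingNorm x = w} = ∅ := by
        rw [Set.eq_empty_iff_forall_notMem]
        intro w hw
        obtain ⟨w', hw', -⟩ := hdown w hw
        exact absurd hw' (he ▸ Set.notMem_empty w')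
      rw [hMe, he]
    · have hMne : {w | ∃ x ∈ M, x ≠ 0 ∧ hammingNorm x = w}.Nonempty :=
        hne.mono hsub
      apply le_antisymm
      · exact Nat.sInf_le (hsub (Nat.sInf_mem hne))
      · obtain ⟨w', hw', hle⟩ := hdown _ (Nat.sInf_mem hMne)
        exact le_trans (Nat.sInf_le hw') hle
end

section
/- Let l be an odd prime power with l^2 ≡ 1 (mod 4), and let C_1, C_2, C_3, C_4 be Hermitian LCD codes over F_{l^2} with parameters [n, k_i, d_i] for i = 1,2,3,4. Let A be the 4×4 matrix over F_{l^2} with rows (1,1,1,1), (1,1,−1,−1), (1,−1,1,−1), (1,−1,−1,1). Then the matrix-product code [C_1,C_2,C_3,C_4]A is a Hermitian LCD code over F_{l^2} with parameters [4n, k_1+k_2+k_3+k_4, ≥ min{4d_1, 2d_2, 2d_3, d_4}]. -/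
open Polynomial Matrix Finset

variable {F : Type*} [Field F]

section MPCAux

variable {F : Type*} [Field F]

abbrev M4 (F : Type*) [Field F] : Matrix (Fin 4) (Fin 4) F :=
  !![1,1,1,1; 1,1,-1,-1; 1,-1,1,-1; 1,-1,-1,1]

lemma rowdot (i i' : Fin 4) :
    ∑ j : Fin 4, M4 F i j * M4 F i' j = if i = i' then 4 else 0 := by
  fin_cases i <;> fin_cases i' <;>
    norm_num [Fin.sum_univ_four, M4, Fin.ext_iff, Matrix.cons_val', Matrix.cons_val_zero,
      Matrix.cons_val_one, Matrix.head_cons, Matrix.head_fin_const, Matrix.cons_val_two,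
      Matrix.cons_val_three, Matrix.tail_cons]

lemma entry_pow {l : ℕ} (hodd : Odd l) (i j : Fin 4) : (M4 F i j) ^ l = M4 F i j := by
  fin_cases i <;> fin_cases j <;>
    norm_num [M4, hodd.neg_one_pow, Matrix.cons_val', Matrix.cons_val_zero,
      Matrix.cons_val_one, Matrix.head_cons, Matrix.head_fin_const]

lemma invert_sum (v : Fin 4 → F) (i : Fin 4) :
    ∑ j : Fin 4, M4 F i j * (∑ i' : Fin 4, M4 F i' j * v i') = 4 * v i := by
  have h : ∀ j, M4 F i j * (∑ i' : Fin 4, M4 F i' j * v i')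
      = ∑ i' : Fin 4, (M4 F i j * M4 F i' j) * v i' := by
    intro j; rw [Finset.mul_sum]; exact Finset.sum_congr rfl fun i' _ => by ring
  simp_rw [h]
  rw [Finset.sum_comm]
  simp_rw [← Finset.sum_mul, rowdot]
  simp

lemma wt_add_le {ι : Type*} [Fintype ι] [DecidableEq F] (a b : ι → F) :
    hammingNorm (a + b) ≤ hammingNorm a + hammingNorm b := by
  have h := hammingDist_triangle (a + b) b 0
  rw [hammingDist_zero_right, hammingDist_zero_right, hammingDist_eq_hammingNorm] at h
  have hn : hammingNorm (-a) = hammingNorm a :=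
    hammingNorm_comp (fun _ (x : F) => -x) (fun _ => neg_injective) (fun _ => neg_zero)
  simpa [hn] using h

lemma wt_neg {ι : Type*} [Fintype ι] [DecidableEq F] (a : ι → F) :
    hammingNorm (-a) = hammingNorm a :=
  hammingNorm_comp (fun _ (x : F) => -x) (fun _ => neg_injective) (fun _ => neg_zero)

lemma wt_sub_le {ι : Type*} [Fintype ι] [DecidableEq F] (a b : ι → F) :
    hammingNorm (a - b) ≤ hammingNorm a + hammingNorm b := by
  rw [sub_eq_add_neg]
  simpa [wt_neg] using wt_add_le a (-b)

lemma wt_smul {ι : Type*} [Fintype ι] [DecidableEq F] {k : F} (hk : k ≠ 0) (a : ι → F) :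
    hammingNorm (k • a) = hammingNorm a :=
  hammingNorm_smul (fun _ => IsLeftRegular.isSMulRegular (mul_right_injective₀ hk)) a

lemma wt_blocks {m n : ℕ} [DecidableEq F] (x : Fin m × Fin n → F) :
    hammingNorm x = ∑ j : Fin m, hammingNorm (fun t => x (j, t)) := by
  simp only [hammingNorm, Finset.card_filter]
  rw [Fintype.sum_prod_type]

/-- The parametrization of the matrix-product code by tuples of codewords. -/
def phiMap {n : ℕ} (C : Fin 4 → Submodule F (Fin n → F)) :
    (Π i, C i) →ₗ[F] (Fin 4 × Fin n → F) where
  toFun c := fun p => ∑ i, M4 F i p.1 * (c i : Fin n → F) p.2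
  map_add' a b := by
    funext p
    simp [mul_add, Finset.sum_add_distrib]
  map_smul' r a := by
    funext p
    simp [Finset.mul_sum, mul_left_comm]

lemma phiMap_range {n : ℕ} (C : Fin 4 → Submodule F (Fin n → F)) :
    LinearMap.range (phiMap C) = matrixProductCode (M4 F) C := by
  ext x
  constructor
  · rintro ⟨c, rfl⟩
    exact ⟨fun i => (c i : Fin n → F), fun i => (c i).2, rfl⟩
  · rintro ⟨c, hc, rfl⟩
    exact ⟨fun i => ⟨c i, hc i⟩, rfl⟩

lemma phiMap_inj {n : ℕ} (C : Fin 4 → Submodule F (Fin n → F)) (h4 : (4 : F) ≠ 0) :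
    Function.Injective (phiMap C) := by
  rw [injective_iff_map_eq_zero]
  intro a ha
  funext i
  have hz : ∀ t, (a i : Fin n → F) t = 0 := by
    intro t
    have h0 : ∀ j : Fin 4, ∑ i' : Fin 4, M4 F i' j * (a i' : Fin n → F) t = 0 := by
      intro j
      exact congrFun ha (j, t)
    have := invert_sum (fun i'' => (a i'' : Fin n → F) t) i
    simp only [h0, mul_zero, Finset.sum_const_zero] at this
    exact (mul_eq_zero.mp this.symm).resolve_left h4
  exact Subtype.ext (funext hz)

end MPCAux

theorem stmt17 {F : Type*} [Field F] [Fintype F] [DecidableEq F]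
    {l : ℕ} (hl : IsPrimePow l) (hodd : Odd l) (hmod : l ^ 2 % 4 = 1)
    (hcard : Fintype.card F = l ^ 2)
    {n : ℕ} (C : Fin 4 → Submodule F (Fin n → F)) (k d : Fin 4 → ℕ)
    (hLCD : ∀ i, IsHermitianLCD l (C i))
    (hk : ∀ i, Module.finrank F (C i) = k i)
    (hC : ∀ i, C i ≠ ⊥)
    (hd : ∀ i, minDist (C i) = d i) :
    IsHermitianLCD l
      (matrixProductCode (!![1,1,1,1; 1,1,-1,-1; 1,-1,1,-1; 1,-1,-1,1] :
        Matrix (Fin 4) (Fin 4) F) C) ∧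
    Module.finrank F
      (matrixProductCode (!![1,1,1,1; 1,1,-1,-1; 1,-1,1,-1; 1,-1,-1,1] :
        Matrix (Fin 4) (Fin 4) F) C) = k 0 + k 1 + k 2 + k 3 ∧
    min (4 * d 0) (min (2 * d 1) (min (2 * d 2) (d 3)))
      ≤ minDist
        (matrixProductCode (!![1,1,1,1; 1,1,-1,-1; 1,-1,1,-1; 1,-1,-1,1] :
          Matrix (Fin 4) (Fin 4) F) C) := by
  classical
  -- characteristic facts
  have h2 : (2 : F) ≠ 0 := by
    intro h20
    have hchar : ringChar F = 2 := by
      have hdvd : ringChar F ∣ 2 := ringChar.dvd (by exact_mod_cast h20)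
      have hp : (ringChar F).Prime := CharP.char_is_prime F (ringChar F)
      exact (Nat.prime_dvd_prime_iff_eq hp Nat.prime_two).mp hdvd
    have hcard2 := FiniteField.even_card_of_char_two hchar
    rw [hcard] at hcard2
    rcases hodd with ⟨m, rfl⟩
    omega
  have h4 : (4 : F) ≠ 0 := by
    have : (4 : F) = 2 * 2 := by norm_num
    rw [this]
    exact mul_ne_zero h2 h2
  set A : Matrix (Fin 4) (Fin 4) F := !![1,1,1,1; 1,1,-1,-1; 1,-1,1,-1; 1,-1,-1,1] with hA
  have hAM : A = M4 F := rfl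
  -- Part 1 : Hermitian LCD
  have hHLCD : IsHermitianLCD l (matrixProductCode A C) := by
    rw [IsHermitianLCD, eq_bot_iff]
    rintro x ⟨hx1, hx2⟩
    obtain ⟨c, hc, rfl⟩ := hx1
    have hci : ∀ i', c i' = 0 := by
      intro i'
      have hmem : c i' ∈ hermitianDual l (C i') := by
        intro y hy
        -- build the test codeword
        have hsing : ∀ i, (Pi.single i' y : Fin 4 → Fin n → F) i ∈ C i := by
          intro i
          by_cases h : i = i'
          · subst h; simpa using hy
          · rw [Pi.single_eq_of_ne h]; exact (C i).zero_mem
        have hb : (fun p : Fin 4 × Fin n => ∑ i, A i p.1 * (Pi.single i' y : Fin 4 → Fin n → F) i p.2)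
            ∈ matrixProductCode A C := ⟨(Pi.single i' y : Fin 4 → Fin n → F), hsing, rfl⟩
        have h0 := hx2 _ hb
        have hbp : ∀ (j : Fin 4) (t : Fin n),
            ∑ i, A i j * (Pi.single i' y : Fin 4 → Fin n → F) i t = A i' j * y t := by
          intro j t
          rw [Finset.sum_eq_single i']
          · simp
          · intro b _ hbne; rw [Pi.single_eq_of_ne hbne]; simp
          · simp
        rw [Fintype.sum_prod_type] at h0
        simp only [hbp] at h0
        have hpow : ∀ (j : Fin 4) (t : Fin n), (A i' j * y t) ^ l = A i' j * y t ^ l := by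
          intro j t
          rw [mul_pow, hAM, entry_pow hodd]
        simp only [hpow] at h0
        have key : (∑ j : Fin 4, ∑ t : Fin n,
              (∑ i, A i j * c i t) * (A i' j * y t ^ l))
            = 4 * ∑ t : Fin n, c i' t * y t ^ l := by
          rw [Finset.sum_comm]
          have h1 : ∀ t : Fin n, ∑ j : Fin 4, (∑ i, A i j * c i t) * (A i' j * y t ^ l)
              = (∑ j : Fin 4, A i' j * (∑ i, A i j * c i t)) * y t ^ l := by
            intro t
            rw [Finset.sum_mul]
            exact Finset.sum_congr rfl fun j _ => by ring
          simp_rw [h1, hAM, invert_sum]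
          rw [Finset.mul_sum]
          exact Finset.sum_congr rfl fun t _ => by ring
        rw [key] at h0
        exact (mul_eq_zero.mp h0).resolve_left h4
      have hboth : c i' ∈ C i' ⊓ hermitianDual l (C i') := ⟨hc i', hmem⟩
      rw [hLCD i'] at hboth
      simpa using hboth
    simp only [Submodule.mem_bot]
    funext p
    simp [hci]
  -- Part 2 : dimension
  have hfin : Module.finrank F (matrixProductCode A C) = k 0 + k 1 + k 2 + k 3 := by
    rw [hAM, ← phiMap_range C, LinearMap.finrank_range_of_inj (phiMap_inj C h4),
      Module.finrank_pi_fintype F, Fin.sum_univ_four, hk 0, hk 1, hk 2, hk 3]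
  -- Part 3 : minimum distance
  have hdle : ∀ i (y : Fin n → F), y ∈ C i → y ≠ 0 → d i ≤ hammingNorm y := by
    intro i y hy hy0
    rw [← hd i]
    exact Nat.sInf_le ⟨y, hy, hy0, rfl⟩
  have hlow : ∀ x ∈ matrixProductCode A C, x ≠ 0 →
      min (4 * d 0) (min (2 * d 1) (min (2 * d 2) (d 3))) ≤ hammingNorm x := by
    rintro x ⟨c, hc, rfl⟩ hx0
    set B : Fin 4 → Fin n → F := fun j t => ∑ i, A i j * c i t with hBdef
    have hwt : hammingNorm (fun p : Fin 4 × Fin n => ∑ i, A i p.1 * c i p.2)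
        = hammingNorm (B 0) + hammingNorm (B 1) + hammingNorm (B 2) + hammingNorm (B 3) := by
      rw [wt_blocks, Fin.sum_univ_four]
    rw [hwt]
    have hBexp : ∀ (j : Fin 4) (t : Fin n),
        B j t = A 0 j * c 0 t + A 1 j * c 1 t + A 2 j * c 2 t + A 3 j * c 3 t := by
      intro j t
      rw [hBdef]
      exact Fin.sum_univ_four _
    by_cases h3 : c 3 = 0
    · by_cases hc2 : c 2 = 0
      · by_cases hc1 : c 1 = 0
        · -- only c 0 can be nonzero
          have hc0 : c 0 ≠ 0 := by
            intro hc0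
            apply hx0
            funext p
            rw [Fin.sum_univ_four]
            simp [hc0, hc1, hc2, h3]
          have hA0 : ∀ j : Fin 4, A 0 j = 1 := by
            intro j; fin_cases j <;> rfl
          have hBj : ∀ j : Fin 4, B j = c 0 := by
            intro j
            funext t
            rw [hBexp j t, hA0 j, h3, hc1, hc2]
            simp
          have hd0 : d 0 ≤ hammingNorm (c 0) := hdle 0 _ (hc 0) hc0
          have e0 := hBj 0; have e1 := hBj 1; have e2 := hBj 2; have e3 := hBj 3
          rw [e0, e1, e2, e3]
          omega
        · -- c 1 ≠ 0
          have e1 : B 0 - B 2 = (2 : F) • c 1 := by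
            funext t
            simp only [Pi.sub_apply, Pi.smul_apply, smul_eq_mul, hBexp]
            simp only [hA, h3, hc2, Pi.zero_apply, Matrix.cons_val', Matrix.cons_val_zero, Matrix.empty_val',
              Matrix.cons_val_fin_one, Matrix.cons_val_one, Matrix.head_cons,
              Matrix.head_fin_const, Matrix.cons_val_two, Matrix.cons_val_three,
              Matrix.tail_cons, Matrix.of_apply]
            ring
          have e2 : B 1 - B 3 = (2 : F) • c 1 := by
            funext t
            simp only [Pi.sub_apply, Pi.smul_apply, smul_eq_mul, hBexp]
            simp only [hA, h3, hc2, Pi.zero_apply, Matrix.cons_val', Matrix.cons_val_zero, Matrix.empty_val',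
              Matrix.cons_val_fin_one, Matrix.cons_val_one, Matrix.head_cons,
              Matrix.head_fin_const, Matrix.cons_val_two, Matrix.cons_val_three,
              Matrix.tail_cons, Matrix.of_apply]
            ring
          have hd1 : d 1 ≤ hammingNorm (c 1) := hdle 1 _ (hc 1) hc1
          have hb1 : hammingNorm (c 1) ≤ hammingNorm (B 0) + hammingNorm (B 2) := by
            rw [← wt_smul h2 (c 1), ← e1]; exact wt_sub_le _ _
          have hb2 : hammingNorm (c 1) ≤ hammingNorm (B 1) + hammingNorm (B 3) := by
            rw [← wt_smul h2 (c 1), ← e2]; exact wt_sub_le _ _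
          omega
      · -- c 2 ≠ 0
        have e1 : B 0 - B 1 = (2 : F) • c 2 := by
          funext t
          simp only [Pi.sub_apply, Pi.smul_apply, smul_eq_mul, hBexp]
          simp only [hA, h3, Pi.zero_apply, Matrix.cons_val', Matrix.cons_val_zero, Matrix.empty_val',
              Matrix.cons_val_fin_one, Matrix.cons_val_one, Matrix.head_cons,
              Matrix.head_fin_const, Matrix.cons_val_two, Matrix.cons_val_three,
              Matrix.tail_cons, Matrix.of_apply]
          ring
        have e2 : B 2 - B 3 = (2 : F) • c 2 := by
          funext t
          simp only [Pi.sub_apply, Pi.smul_apply, smul_eq_mul, hBexp]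
          simp only [hA, h3, Pi.zero_apply, Matrix.cons_val', Matrix.cons_val_zero, Matrix.empty_val',
              Matrix.cons_val_fin_one, Matrix.cons_val_one, Matrix.head_cons,
              Matrix.head_fin_const, Matrix.cons_val_two, Matrix.cons_val_three,
              Matrix.tail_cons, Matrix.of_apply]
          ring
        have hd2 : d 2 ≤ hammingNorm (c 2) := hdle 2 _ (hc 2) hc2
        have hb1 : hammingNorm (c 2) ≤ hammingNorm (B 0) + hammingNorm (B 1) := by
          rw [← wt_smul h2 (c 2), ← e1]; exact wt_sub_le _ _
        have hb2 : hammingNorm (c 2) ≤ hammingNorm (B 2) + hammingNorm (B 3) := by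
          rw [← wt_smul h2 (c 2), ← e2]; exact wt_sub_le _ _
        omega
    · -- c 3 ≠ 0
      have e : B 0 - B 1 - B 2 + B 3 = (4 : F) • c 3 := by
        funext t
        simp only [Pi.add_apply, Pi.sub_apply, Pi.smul_apply, smul_eq_mul, hBexp]
        simp only [hA, Matrix.cons_val', Matrix.cons_val_zero, Matrix.empty_val',
              Matrix.cons_val_fin_one, Matrix.cons_val_one, Matrix.head_cons,
              Matrix.head_fin_const, Matrix.cons_val_two, Matrix.cons_val_three,
              Matrix.tail_cons, Matrix.of_apply]
        ring
      have hd3 : d 3 ≤ hammingNorm (c 3) := hdle 3 _ (hc 3) h3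
      have hb : hammingNorm (c 3)
          ≤ hammingNorm (B 0) + hammingNorm (B 1) + hammingNorm (B 2) + hammingNorm (B 3) := by
        rw [← wt_smul h4 (c 3), ← e]
        calc hammingNorm (B 0 - B 1 - B 2 + B 3)
            ≤ hammingNorm (B 0 - B 1 - B 2) + hammingNorm (B 3) := wt_add_le _ _
          _ ≤ (hammingNorm (B 0 - B 1) + hammingNorm (B 2)) + hammingNorm (B 3) := by
              have := wt_sub_le (B 0 - B 1) (B 2); omega
          _ ≤ (hammingNorm (B 0) + hammingNorm (B 1) + hammingNorm (B 2)) + hammingNorm (B 3) := by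
              have := wt_sub_le (B 0) (B 1); omega
          _ = _ := by ring
      omega
  -- the set of weights is nonempty
  obtain ⟨c0, hc0mem, hc0ne⟩ := (Submodule.ne_bot_iff (C 0)).mp (hC 0)
  have hx0mem : (fun p : Fin 4 × Fin n => ∑ i, A i p.1 * (Pi.single (0 : Fin 4) c0 : Fin 4 → Fin n → F) i p.2)
      ∈ matrixProductCode A C := by
    refine ⟨(Pi.single (0 : Fin 4) c0 : Fin 4 → Fin n → F), ?_, rfl⟩
    intro i
    by_cases h : i = 0
    · subst h; simpa using hc0mem
    · rw [Pi.single_eq_of_ne h]; exact (C i).zero_mem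
  have hx0ne : (fun p : Fin 4 × Fin n => ∑ i, A i p.1 * (Pi.single (0 : Fin 4) c0 : Fin 4 → Fin n → F) i p.2) ≠ 0 := by
    intro heq
    obtain ⟨t, ht⟩ := Function.ne_iff.mp hc0ne
    apply ht
    have := congrFun heq ((0 : Fin 4), t)
    rw [Finset.sum_eq_single (0 : Fin 4)] at this
    · simpa [hA, Pi.single_eq_same, Matrix.cons_val', Matrix.cons_val_zero, Matrix.empty_val',
              Matrix.cons_val_fin_one, Matrix.cons_val_one, Matrix.head_cons,
              Matrix.head_fin_const, Matrix.cons_val_two, Matrix.cons_val_three,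
              Matrix.tail_cons, Matrix.of_apply] using this
    · intro b _ hbne; rw [Pi.single_eq_of_ne hbne]; simp
    · simp
  have hne : {dd | ∃ x ∈ matrixProductCode A C, x ≠ 0 ∧ hammingNorm x = dd}.Nonempty :=
    ⟨_, _, hx0mem, hx0ne, rfl⟩
  obtain ⟨x, hxm, hxn, hxe⟩ := Nat.sInf_mem hne
  refine ⟨hHLCD, hfin, ?_⟩
  show _ ≤ minDist (matrixProductCode A C)
  rw [minDist, ← hxe]
  exact hlow x hxm hxn
end

section
/- Let F_q be a finite field with q ≡ 1 (mod 4), and let C_1, C_2, C_3, C_4 be LCD codes over F_q with parameters [n, k_i, d_i] for i = 1,2,3,4. Let A be the 4×4 matrix over F_q with rows (1,1,1,1), (1,1,−1,−1), (1,−1,1,−1), (1,−1,−1,1). Then the matrix-product code [C_1,C_2,C_3,C_4]A is an LCD code over F_q with parameters [4n, k_1+k_2+k_3+k_4, ≥ min{4d_1, 2d_2, 2d_3, d_4}]. -/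
open Polynomial Matrix Finset

variable {F : Type*} [Field F]

namespace Stmt18Aux

private def Am (F : Type*) [Field F] : Matrix (Fin 4) (Fin 4) F :=
  !![1,1,1,1; 1,1,-1,-1; 1,-1,1,-1; 1,-1,-1,1]

attribute [local simp] Matrix.cons_val_two Matrix.cons_val_three Matrix.vecHead Matrix.vecTail

lemma two_ne_zero' {F : Type*} [Field F] [Fintype F] (hq : Fintype.card F % 4 = 1) :
    (2 : F) ≠ 0 := by
  intro h
  have hchar : ringChar F = 2 := by
    have h2 : ((2 : ℕ) : F) = 0 := by exact_mod_cast h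
    have hdvd : ringChar F ∣ 2 := (ringChar.spec F 2).mp h2
    have hprime : (ringChar F).Prime := CharP.char_is_prime F (ringChar F)
    exact (Nat.prime_dvd_prime_iff_eq hprime Nat.prime_two).mp hdvd
  have := FiniteField.even_card_iff_char_two.mp hchar
  omega

lemma four_ne_zero' {F : Type*} [Field F] (h2 : (2 : F) ≠ 0) : (4 : F) ≠ 0 := by
  have := mul_ne_zero h2 h2; norm_num at this; exact this

lemma orth (i k : Fin 4) : ∑ j : Fin 4, Am F i j * Am F k j = if i = k then 4 else 0 := by
  fin_cases i <;> fin_cases k <;> simp [Am, Fin.sum_univ_four] <;> ring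

lemma recover (v : Fin 4 → F) (k : Fin 4) :
    ∑ j : Fin 4, Am F k j * ∑ i : Fin 4, Am F i j * v i = 4 * v k := by
  fin_cases k <;> simp [Am, Fin.sum_univ_four] <;> ring

lemma pairing {n : ℕ} (c : Fin 4 → Fin n → F) (i0 : Fin 4) (b : Fin n → F) :
    ∑ p : Fin 4 × Fin n, (∑ i : Fin 4, Am F i p.1 * c i p.2) * (Am F i0 p.1 * b p.2)
      = 4 * ∑ t, c i0 t * b t := by
  rw [Fintype.sum_prod_type]
  have step : ∀ j : Fin 4, ∑ t, (∑ i : Fin 4, Am F i j * c i t) * (Am F i0 j * b t)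
      = ∑ i : Fin 4, (Am F i j * Am F i0 j) * ∑ t, c i t * b t := by
    intro j
    simp only [Finset.sum_mul]
    rw [Finset.sum_comm]
    refine Finset.sum_congr rfl fun i _ => ?_
    rw [Finset.mul_sum]
    refine Finset.sum_congr rfl fun t _ => ?_
    ring
  calc ∑ j : Fin 4, ∑ t, (∑ i : Fin 4, Am F i j * c i t) * (Am F i0 j * b t)
      = ∑ j : Fin 4, ∑ i : Fin 4, (Am F i j * Am F i0 j) * ∑ t, c i t * b t :=
        Finset.sum_congr rfl fun j _ => step j
    _ = ∑ i : Fin 4, (∑ j : Fin 4, Am F i j * Am F i0 j) * ∑ t, c i t * b t := by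
        rw [Finset.sum_comm]
        simp only [Finset.sum_mul]
    _ = 4 * ∑ t, c i0 t * b t := by
        simp only [orth, ite_mul, zero_mul]
        rw [Finset.sum_ite_eq' Finset.univ i0]
        simp

lemma col_card [DecidableEq F] (h2 : (2 : F) ≠ 0) (v w : Fin 4 → F)
    (hw : ∀ j, w j = ∑ i : Fin 4, Am F i j * v i) (i : Fin 4)
    (hvi : v i ≠ 0) (hgt : ∀ i', i < i' → v i' = 0) :
    (![4,2,2,1] : Fin 4 → ℕ) i ≤ (Finset.univ.filter fun j => w j ≠ 0).card := by
  have e0 : w 0 = v 0 + v 1 + v 2 + v 3 := by rw [hw]; simp [Am, Fin.sum_univ_four]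
  have e1 : w 1 = v 0 + v 1 - v 2 - v 3 := by rw [hw]; simp [Am, Fin.sum_univ_four]; ring
  have e2 : w 2 = v 0 - v 1 + v 2 - v 3 := by rw [hw]; simp [Am, Fin.sum_univ_four]; ring
  have e3 : w 3 = v 0 - v 1 - v 2 + v 3 := by rw [hw]; simp [Am, Fin.sum_univ_four]; ring
  fin_cases i
  · -- i = 0
    have hv0 : v 0 ≠ 0 := hvi
    have h1 : v 1 = 0 := hgt 1 (by decide)
    have h2' : v 2 = 0 := hgt 2 (by decide)
    have h3 : v 3 = 0 := hgt 3 (by decide)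
    have hall : ∀ j, w j ≠ 0 := by
      intro j
      rw [hw]
      fin_cases j <;> simp [Am, Fin.sum_univ_four, h1, h2', h3, hv0]
    rw [Finset.filter_true_of_mem (fun j _ => hall j)]
    simp
  · -- i = 1
    have hv1 : v 1 ≠ 0 := hvi
    have h2' : v 2 = 0 := hgt 2 (by decide)
    have h3 : v 3 = 0 := hgt 3 (by decide)
    simp only [h2', h3, sub_zero, add_zero] at e0 e1 e2 e3
    show 2 ≤ _
    by_cases hc : v 0 + v 1 = 0
    · have hne : v 0 - v 1 ≠ 0 := by
        intro h; apply hv1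
        have h21 : (2:F) * v 1 = 0 := by linear_combination hc - h
        rcases mul_eq_zero.mp h21 with h' | h'
        · exact absurd h' h2
        · exact h'
      have hsub : ({2, 3} : Finset (Fin 4)) ⊆ Finset.univ.filter fun j => w j ≠ 0 := by
        intro j hj
        simp only [Finset.mem_insert, Finset.mem_singleton] at hj
        rcases hj with rfl | rfl <;> simp only [Finset.mem_filter, Finset.mem_univ, true_and]
        · rw [e2]; exact hne
        · rw [e3]; exact hne
      calc (2:ℕ) = ({2,3} : Finset (Fin 4)).card := by decide
        _ ≤ _ := Finset.card_le_card hsub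
    · have hsub : ({0, 1} : Finset (Fin 4)) ⊆ Finset.univ.filter fun j => w j ≠ 0 := by
        intro j hj
        simp only [Finset.mem_insert, Finset.mem_singleton] at hj
        rcases hj with rfl | rfl <;> simp only [Finset.mem_filter, Finset.mem_univ, true_and]
        · rw [e0]; exact hc
        · rw [e1]; exact hc
      calc (2:ℕ) = ({0,1} : Finset (Fin 4)).card := by decide
        _ ≤ _ := Finset.card_le_card hsub
  · -- i = 2
    have hv2 : v 2 ≠ 0 := hvi
    have h3 : v 3 = 0 := hgt 3 (by decide)
    simp only [h3, sub_zero, add_zero] at e0 e1 e2 e3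
    show 2 ≤ _
    have hd01 : w 0 ≠ 0 ∨ w 1 ≠ 0 := by
      by_contra h; push_neg at h
      apply hv2
      have key : (2:F) * v 2 = w 0 - w 1 := by rw [e0, e1]; ring
      rw [h.1, h.2, sub_zero] at key
      rcases mul_eq_zero.mp key with h' | h'
      · exact absurd h' h2
      · exact h'
    have hd23 : w 2 ≠ 0 ∨ w 3 ≠ 0 := by
      by_contra h; push_neg at h
      apply hv2
      have key : (2:F) * v 2 = w 2 - w 3 := by rw [e2, e3]; ring
      rw [h.1, h.2, sub_zero] at key
      rcases mul_eq_zero.mp key with h' | h'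
      · exact absurd h' h2
      · exact h'
    obtain ⟨j1, hj1m, hj1⟩ : ∃ j1 : Fin 4, (j1 = 0 ∨ j1 = 1) ∧ w j1 ≠ 0 := by
      rcases hd01 with h | h
      exacts [⟨0, Or.inl rfl, h⟩, ⟨1, Or.inr rfl, h⟩]
    obtain ⟨j2, hj2m, hj2⟩ : ∃ j2 : Fin 4, (j2 = 2 ∨ j2 = 3) ∧ w j2 ≠ 0 := by
      rcases hd23 with h | h
      exacts [⟨2, Or.inl rfl, h⟩, ⟨3, Or.inr rfl, h⟩]
    have hne : j1 ≠ j2 := by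
      rcases hj1m with rfl | rfl <;> rcases hj2m with rfl | rfl <;> decide
    have hsub : ({j1, j2} : Finset (Fin 4)) ⊆ Finset.univ.filter fun j => w j ≠ 0 := by
      intro j hj
      simp only [Finset.mem_insert, Finset.mem_singleton] at hj
      rcases hj with rfl | rfl <;> simp only [Finset.mem_filter, Finset.mem_univ, true_and]
      exacts [hj1, hj2]
    calc (2:ℕ) = ({j1, j2} : Finset (Fin 4)).card := by
          rw [Finset.card_insert_of_notMem (by simpa using hne), Finset.card_singleton]
      _ ≤ _ := Finset.card_le_card hsub
  · -- i = 3
    have hv3 : v 3 ≠ 0 := hvi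
    show 1 ≤ _
    have hex : ∃ j, w j ≠ 0 := by
      by_contra h; push_neg at h
      have key : (4:F) * v 3 = w 0 - w 1 - w 2 + w 3 := by rw [e0, e1, e2, e3]; ring
      rw [h 0, h 1, h 2, h 3] at key
      simp only [sub_zero, add_zero, zero_sub, neg_zero, zero_add] at key
      rcases mul_eq_zero.mp key with h' | h'
      · exact four_ne_zero' h2 h'
      · exact hv3 h'
    obtain ⟨j, hj⟩ := hex
    exact Finset.card_pos.mpr ⟨j, Finset.mem_filter.mpr ⟨Finset.mem_univ _, hj⟩⟩

lemma hamming_decomp {n : ℕ} [DecidableEq F] (x : Fin 4 × Fin n → F) :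
    hammingNorm x = ∑ t : Fin n, (Finset.univ.filter fun j : Fin 4 => x (j, t) ≠ 0).card := by
  rw [hammingNorm]
  rw [Finset.card_eq_sum_card_fiberwise (f := Prod.snd) (t := univ) (fun _ _ => mem_univ _)]
  refine Finset.sum_congr rfl fun t _ => ?_
  rw [Finset.filter_filter]
  have : (Finset.univ.filter fun p : Fin 4 × Fin n => x p ≠ 0 ∧ p.2 = t)
      = (Finset.univ.filter fun j : Fin 4 => x (j, t) ≠ 0).map
          ⟨fun j => (j, t), fun a b h => by simpa using h⟩ := by
    ext ⟨j, t'⟩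
    simp only [Finset.mem_filter, Finset.mem_univ, true_and, Finset.mem_map,
      Function.Embedding.coeFn_mk]
    constructor
    · rintro ⟨h1, rfl⟩
      exact ⟨j, h1, rfl⟩
    · rintro ⟨j', hj', h⟩
      obtain ⟨rfl, rfl⟩ := Prod.mk.injEq _ _ _ _ ▸ h
      exact ⟨hj', rfl⟩
  rw [this, Finset.card_map]

/-- The natural linear map from the product of the codes to the matrix-product code. -/
noncomputable def phi {n : ℕ} (C : Fin 4 → Submodule F (Fin n → F)) :
    (∀ i, C i) →ₗ[F] (Fin 4 × Fin n → F) where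
  toFun c := fun p => ∑ i : Fin 4, Am F i p.1 * (c i : Fin n → F) p.2
  map_add' a b := by
    funext p
    simp only [Submodule.coe_add, Pi.add_apply, mul_add]
    rw [Finset.sum_add_distrib]
  map_smul' r a := by
    funext p
    simp only [SetLike.val_smul, Pi.smul_apply, smul_eq_mul, RingHom.id_apply]
    rw [Finset.mul_sum]
    exact Finset.sum_congr rfl fun i _ => by ring

lemma range_phi {n : ℕ} (C : Fin 4 → Submodule F (Fin n → F)) :
    LinearMap.range (phi C) = matrixProductCode (Am F) C := by
  ext x
  constructor
  · rintro ⟨c, rfl⟩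
    exact ⟨fun i => (c i : Fin n → F), fun i => (c i).2, rfl⟩
  · rintro ⟨c, hc, rfl⟩
    exact ⟨fun i => ⟨c i, hc i⟩, rfl⟩

lemma phi_inj {n : ℕ} (C : Fin 4 → Submodule F (Fin n → F)) (h4 : (4 : F) ≠ 0) :
    Function.Injective (phi C) := by
  rw [← LinearMap.ker_eq_bot, Submodule.eq_bot_iff]
  intro c hc
  have hz : ∀ (j : Fin 4) (t : Fin n), ∑ i : Fin 4, Am F i j * (c i : Fin n → F) t = 0 :=
    fun j t => congrFun hc (j, t)
  have hzero : ∀ (i : Fin 4) (t : Fin n), (c i : Fin n → F) t = 0 := by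
    intro i t
    have h := recover (fun i' => (c i' : Fin n → F) t) i
    simp only [hz, mul_zero, Finset.sum_const_zero] at h
    rcases mul_eq_zero.mp h.symm with h' | h'
    · exact absurd h' h4
    · exact h'
  funext i
  exact Subtype.ext (funext fun t => hzero i t)

end Stmt18Aux

open Stmt18Aux

theorem stmt18 {F : Type*} [Field F] [Fintype F] [DecidableEq F]
    (hq : Fintype.card F % 4 = 1)
    {n : ℕ} (C : Fin 4 → Submodule F (Fin n → F)) (k d : Fin 4 → ℕ)
    (hLCD : ∀ i, IsLCD (C i))
    (hk : ∀ i, Module.finrank F (C i) = k i)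
    (hC : ∀ i, C i ≠ ⊥)
    (hd : ∀ i, minDist (C i) = d i) :
    IsLCD
      (matrixProductCode (!![1,1,1,1; 1,1,-1,-1; 1,-1,1,-1; 1,-1,-1,1] :
        Matrix (Fin 4) (Fin 4) F) C) ∧
    Module.finrank F
      (matrixProductCode (!![1,1,1,1; 1,1,-1,-1; 1,-1,1,-1; 1,-1,-1,1] :
        Matrix (Fin 4) (Fin 4) F) C) = k 0 + k 1 + k 2 + k 3 ∧
    min (4 * d 0) (min (2 * d 1) (min (2 * d 2) (d 3)))
      ≤ minDist
        (matrixProductCode (!![1,1,1,1; 1,1,-1,-1; 1,-1,1,-1; 1,-1,-1,1] :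
          Matrix (Fin 4) (Fin 4) F) C) := by
  classical
  have h2 : (2 : F) ≠ 0 := two_ne_zero' hq
  have h4 : (4 : F) ≠ 0 := four_ne_zero' h2
  suffices h : IsLCD (matrixProductCode (Am F) C) ∧
      Module.finrank F (matrixProductCode (Am F) C) = k 0 + k 1 + k 2 + k 3 ∧
      min (4 * d 0) (min (2 * d 1) (min (2 * d 2) (d 3)))
        ≤ minDist (matrixProductCode (Am F) C) by exact h
  refine ⟨?_, ?_, ?_⟩
  · -- LCD
    rw [IsLCD, eq_bot_iff]
    intro x hx
    rw [Submodule.mem_inf] at hx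
    obtain ⟨⟨c, hc, rfl⟩, hx2⟩ := hx
    have hco : ∀ i0, c i0 = 0 := by
      intro i0
      have hdual : ∀ b ∈ C i0, ∑ t, c i0 t * b t = 0 := by
        intro b hb
        have hy : (fun p : Fin 4 × Fin n => Am F i0 p.1 * b p.2) ∈ matrixProductCode (Am F) C := by
          refine ⟨fun i => if i = i0 then b else 0, fun i => ?_, ?_⟩
          · by_cases hii : i = i0
            · subst hii; simp [hb]
            · simp [hii, (C i).zero_mem]
          · funext p
            symm
            simp only [ite_apply, Pi.zero_apply, mul_ite, mul_zero]
            rw [Finset.sum_ite_eq' Finset.univ i0]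
            simp
        have hpz := hx2 _ hy
        rw [pairing c i0 b] at hpz
        rcases mul_eq_zero.mp hpz with h' | h'
        · exact absurd h' h4
        · exact h'
      have hmem : c i0 ∈ C i0 ⊓ dualCode (C i0) := ⟨hc i0, hdual⟩
      rw [hLCD i0] at hmem
      exact (Submodule.mem_bot F).mp hmem
    rw [Submodule.mem_bot]
    funext p
    simp [hco]
  · -- dimension
    rw [← range_phi C, LinearMap.finrank_range_of_inj (phi_inj C h4),
      Module.finrank_pi_fintype, Fin.sum_univ_four, hk 0, hk 1, hk 2, hk 3]
  · -- minimum distance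
    have key : ∀ (c : Fin 4 → Fin n → F), (∀ i, c i ∈ C i) →
        ∀ (i : Fin 4) (D : ℕ), D = (![4,2,2,1] : Fin 4 → ℕ) i → c i ≠ 0 →
        (∀ i', i < i' → c i' = 0) →
        D * d i ≤ hammingNorm (fun p : Fin 4 × Fin n => ∑ i' : Fin 4, Am F i' p.1 * c i' p.2) := by
      intro c hc i D hD hci hgt
      subst hD
      have hdi : d i ≤ hammingNorm (c i) := by
        rw [← hd i]
        exact Nat.sInf_le ⟨c i, hc i, hci, rfl⟩
      rw [hamming_decomp]
      set T := Finset.univ.filter fun t => c i t ≠ 0 with hT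
      have hTcard : hammingNorm (c i) = T.card := rfl
      calc (![4,2,2,1] : Fin 4 → ℕ) i * d i
          ≤ (![4,2,2,1] : Fin 4 → ℕ) i * T.card :=
            Nat.mul_le_mul_left _ (hTcard ▸ hdi)
        _ = ∑ _t ∈ T, (![4,2,2,1] : Fin 4 → ℕ) i := by
            rw [Finset.sum_const, smul_eq_mul, mul_comm]
        _ ≤ ∑ t ∈ T, (Finset.univ.filter fun j : Fin 4 =>
              (fun p : Fin 4 × Fin n => ∑ i' : Fin 4, Am F i' p.1 * c i' p.2) (j, t) ≠ 0).card := by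
            refine Finset.sum_le_sum fun t ht => ?_
            refine col_card h2 (fun i' => c i' t) _ (fun j => rfl) i
              ((Finset.mem_filter.mp ht).2) (fun i' hi' => by show c i' t = 0; rw [hgt i' hi']; rfl)
        _ ≤ ∑ t : Fin n, (Finset.univ.filter fun j : Fin 4 =>
              (fun p : Fin 4 × Fin n => ∑ i' : Fin 4, Am F i' p.1 * c i' p.2) (j, t) ≠ 0).card :=
            Finset.sum_le_sum_of_subset (Finset.subset_univ T)
    apply le_csInf
    · -- nonempty
      obtain ⟨c0, hc0, hc0ne⟩ := (Submodule.ne_bot_iff (C 0)).mp (hC 0)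
      obtain ⟨t0, ht0⟩ := Function.ne_iff.mp hc0ne
      refine ⟨_, (fun p : Fin 4 × Fin n => ∑ i : Fin 4, Am F i p.1 *
        (if i = 0 then c0 else 0) p.2), ⟨fun i => if i = 0 then c0 else 0, fun i => ?_, rfl⟩,
        ?_, rfl⟩
      · by_cases hii : i = 0
        · subst hii; simp [hc0]
        · simp [hii, (C i).zero_mem]
      · intro hzero
        apply ht0
        have := congrFun hzero (0, t0)
        simpa [Am, Fin.sum_univ_four] using this
    · rintro r ⟨x, hx, hxne, rfl⟩
      obtain ⟨c, hc, rfl⟩ := hx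
      have hex : ∃ i, c i ≠ 0 := by
        by_contra h; push_neg at h
        apply hxne
        funext p
        simp [h]
      by_cases hc3 : c 3 = 0
      · by_cases hc2 : c 2 = 0
        · by_cases hc1 : c 1 = 0
          · have hc0 : c 0 ≠ 0 := by
              obtain ⟨i, hi⟩ := hex
              fin_cases i
              · exact hi
              · exact absurd hc1 hi
              · exact absurd hc2 hi
              · exact absurd hc3 hi
            have hb := key c hc 0 4 (by decide) hc0 (fun i' hi' => by
              fin_cases i'
              · exact absurd hi' (by decide)
              · exact hc1
              · exact hc2
              · exact hc3)
            omega
          · have hb := key c hc 1 2 (by decide) hc1 (fun i' hi' => by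
              fin_cases i'
              · exact absurd hi' (by decide)
              · exact absurd hi' (by decide)
              · exact hc2
              · exact hc3)
            omega
        · have hb := key c hc 2 2 (by decide) hc2 (fun i' hi' => by
            fin_cases i'
            · exact absurd hi' (by decide)
            · exact absurd hi' (by decide)
            · exact absurd hi' (by decide)
            · exact hc3)
          omega
      · have hb := key c hc 3 1 (by decide) hc3 (fun i' hi' => by
          fin_cases i'
          · exact absurd hi' (by decide)
          · exact absurd hi' (by decide)
          · exact absurd hi' (by decide)
          · exact absurd hi' (by decide))
        omega
end

section
/- Let C_1 and C_2 be LCD codes over the binary field F_2 with parameters [n, k_1, d_1] and [n, k_2, d_2] respectively, and let A be the 3×3 matrix over F_2 with rows (1,0,1), (1,1,0), (1,1,1). Then the matrix-product code C = [C_1, C_1, C_2]A is an LCD code over F_2 with parameters [3n, 2k_1 + k_2, ≥ min{2d_1, d_2}]. -/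
open Polynomial Matrix Finset

variable {F : Type*} [Field F]

namespace Stmt19Aux

abbrev F2 := ZMod 2
abbrev A3 : Matrix (Fin 3) (Fin 3) F2 := !![1,0,1; 1,1,0; 1,1,1]

lemma solve3 : ∀ (a b c : F2),
    A3 0 0 * a + A3 1 0 * b + A3 2 0 * c = 0 →
    A3 0 1 * a + A3 1 1 * b + A3 2 1 * c = 0 →
    A3 0 2 * a + A3 1 2 * b + A3 2 2 * c = 0 → a = 0 ∧ b = 0 ∧ c = 0 := by decide

lemma inner3 : ∀ (a1 a2 a3 b1 b2 b3 : F2),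
    (A3 0 0 * a1 + A3 1 0 * a2 + A3 2 0 * a3) * (A3 0 0 * b1 + A3 1 0 * b2 + A3 2 0 * b3)
    + (A3 0 1 * a1 + A3 1 1 * a2 + A3 2 1 * a3) * (A3 0 1 * b1 + A3 1 1 * b2 + A3 2 1 * b3)
    + (A3 0 2 * a1 + A3 1 2 * a2 + A3 2 2 * a3) * (A3 0 2 * b1 + A3 1 2 * b2 + A3 2 2 * b3)
    = a1 * b2 + a2 * b1 + a3 * b3 := by decide

lemma block0 : ∀ (a b c : F2), A3 0 0 * a + A3 1 0 * b + A3 2 0 * c = a + b + c := by decide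
lemma block1 : ∀ (a b c : F2), A3 0 1 * a + A3 1 1 * b + A3 2 1 * c = b + c := by decide
lemma block2 : ∀ (a b c : F2), A3 0 2 * a + A3 1 2 * b + A3 2 2 * c = a + c := by decide

variable {n : ℕ}

def phi3 {n : ℕ} : ((Fin n → F2) × (Fin n → F2) × (Fin n → F2)) →ₗ[F2] (Fin 3 × Fin n → F2) where
  toFun c := fun p => A3 0 p.1 * c.1 p.2 + A3 1 p.1 * c.2.1 p.2 + A3 2 p.1 * c.2.2 p.2
  map_add' a b := by funext p; simp only [Prod.fst_add, Prod.snd_add, Pi.add_apply]; ring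
  map_smul' r a := by
    funext p
    simp only [Prod.smul_fst, Prod.smul_snd, Pi.smul_apply, smul_eq_mul, RingHom.id_apply]
    ring

lemma phi3_apply (c : (Fin n → F2) × (Fin n → F2) × (Fin n → F2)) (p : Fin 3 × Fin n) :
    phi3 c p = A3 0 p.1 * c.1 p.2 + A3 1 p.1 * c.2.1 p.2 + A3 2 p.1 * c.2.2 p.2 := rfl

lemma phi3_inj : Function.Injective (phi3 (n := n)) := by
  rw [injective_iff_map_eq_zero]
  rintro ⟨c1, c2, c3⟩ hc
  have key : ∀ t, c1 t = 0 ∧ c2 t = 0 ∧ c3 t = 0 := by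
    intro t
    have h1 := congrFun hc (0, t)
    have h2 := congrFun hc (1, t)
    have h3 := congrFun hc (2, t)
    rw [phi3_apply] at h1 h2 h3
    exact solve3 _ _ _ h1 h2 h3
  refine Prod.ext ?_ (Prod.ext ?_ ?_) <;> funext t <;> simp only [Pi.zero_apply]
  exacts [(key t).1, (key t).2.1, (key t).2.2]

lemma phi3_block0 (c : (Fin n → F2) × (Fin n → F2) × (Fin n → F2)) :
    (fun t => phi3 c (0, t)) = c.1 + c.2.1 + c.2.2 := by
  funext t; rw [phi3_apply]; exact block0 _ _ _

lemma phi3_block1 (c : (Fin n → F2) × (Fin n → F2) × (Fin n → F2)) :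
    (fun t => phi3 c (1, t)) = c.2.1 + c.2.2 := by
  funext t; rw [phi3_apply]; exact block1 _ _ _

lemma phi3_block2 (c : (Fin n → F2) × (Fin n → F2) × (Fin n → F2)) :
    (fun t => phi3 c (2, t)) = c.1 + c.2.2 := by
  funext t; rw [phi3_apply]; exact block2 _ _ _

lemma phi3_inner (c e : (Fin n → F2) × (Fin n → F2) × (Fin n → F2)) :
    ∑ p : Fin 3 × Fin n, phi3 c p * phi3 e p
      = ∑ t, (c.1 t * e.2.1 t + c.2.1 t * e.1 t + c.2.2 t * e.2.2 t) := by
  rw [Fintype.sum_prod_type, Fin.sum_univ_three, ← Finset.sum_add_distrib,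
    ← Finset.sum_add_distrib]
  refine Finset.sum_congr rfl fun t _ => ?_
  rw [phi3_apply, phi3_apply, phi3_apply, phi3_apply, phi3_apply, phi3_apply]
  exact inner3 _ _ _ _ _ _

lemma wt_split (x : Fin 3 × Fin n → F2) :
    hammingNorm x = hammingNorm (fun t => x (0, t)) + hammingNorm (fun t => x (1, t))
      + hammingNorm (fun t => x (2, t)) := by
  classical
  simp only [hammingNorm, Finset.card_filter]
  rw [Fintype.sum_prod_type, Fin.sum_univ_three]

lemma wt_add_le (a b : Fin n → F2) :
    hammingNorm (a + b) ≤ hammingNorm a + hammingNorm b := by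
  classical
  simp only [hammingNorm, Finset.card_filter, ← Finset.sum_add_distrib]
  refine Finset.sum_le_sum fun i _ => ?_
  by_cases ha : a i = 0 <;> by_cases hb : b i = 0 <;> simp [ha, hb] <;> split_ifs <;> omega

def prodEquivSub {R M N : Type*} [Ring R] [AddCommGroup M] [AddCommGroup N]
    [Module R M] [Module R N] (p : Submodule R M) (q : Submodule R N) :
    (p.prod q) ≃ₗ[R] p × q where
  toFun x := (⟨x.1.1, x.2.1⟩, ⟨x.1.2, x.2.2⟩)
  invFun x := ⟨(x.1.1, x.2.1), ⟨x.1.2, x.2.2⟩⟩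
  map_add' _ _ := rfl
  map_smul' _ _ := rfl
  left_inv _ := rfl
  right_inv _ := rfl


lemma char2sum : ∀ a b c : F2, c = (a + b + c) + ((b + c) + (a + c)) := by decide

end Stmt19Aux

theorem stmt19 {n : ℕ} (C₁ C₂ : Submodule (ZMod 2) (Fin n → ZMod 2))
    (k₁ d₁ k₂ d₂ : ℕ)
    (hLCD₁ : IsLCD C₁) (hLCD₂ : IsLCD C₂)
    (hk₁ : Module.finrank (ZMod 2) C₁ = k₁) (hd₁ : minDist C₁ = d₁)
    (hk₂ : Module.finrank (ZMod 2) C₂ = k₂) (hd₂ : minDist C₂ = d₂)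
    (hC₁ : C₁ ≠ ⊥) (hC₂ : C₂ ≠ ⊥) :
    IsLCD (matrixProductCode (!![1,0,1; 1,1,0; 1,1,1] :
        Matrix (Fin 3) (Fin 3) (ZMod 2)) ![C₁, C₁, C₂]) ∧
    Module.finrank (ZMod 2)
      (matrixProductCode (!![1,0,1; 1,1,0; 1,1,1] :
        Matrix (Fin 3) (Fin 3) (ZMod 2)) ![C₁, C₁, C₂]) = 2 * k₁ + k₂ ∧
    min (2 * d₁) d₂
      ≤ minDist (matrixProductCode (!![1,0,1; 1,1,0; 1,1,1] :
          Matrix (Fin 3) (Fin 3) (ZMod 2)) ![C₁, C₁, C₂]) := by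
  
  classical
  open Stmt19Aux in
  have hmpc : matrixProductCode (!![1,0,1; 1,1,0; 1,1,1] :
      Matrix (Fin 3) (Fin 3) (ZMod 2)) ![C₁, C₁, C₂]
      = Submodule.map Stmt19Aux.phi3 (C₁.prod (C₁.prod C₂)) := by
    ext x
    constructor
    · rintro ⟨c, hc, rfl⟩
      refine ⟨(c 0, c 1, c 2), Submodule.mem_prod.mpr ⟨by simpa using hc 0,
        Submodule.mem_prod.mpr ⟨by simpa using hc 1, by simpa using hc 2⟩⟩, ?_⟩
      funext p
      rw [Stmt19Aux.phi3_apply, Fin.sum_univ_three]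
    · rintro ⟨⟨c1, c2, c3⟩, hm, rfl⟩
      refine ⟨![c1, c2, c3], fun i => ?_, ?_⟩
      · fin_cases i
        · simpa using hm.1
        · simpa using hm.2.1
        · simpa using hm.2.2
      · funext p
        rw [Fin.sum_univ_three, Stmt19Aux.phi3_apply]
        rfl
  refine ⟨?_, ?_, ?_⟩
  · -- LCD
    rw [IsLCD, eq_bot_iff]
    intro x hx
    rw [Submodule.mem_inf] at hx
    obtain ⟨hxC, hxD⟩ := hx
    rw [hmpc] at hxC
    obtain ⟨⟨c1, c2, c3⟩, hcP, rfl⟩ := hxC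
    have hD : ∀ b ∈ matrixProductCode (!![1,0,1; 1,1,0; 1,1,1] :
        Matrix (Fin 3) (Fin 3) (ZMod 2)) ![C₁, C₁, C₂],
        ∑ p, Stmt19Aux.phi3 (c1, c2, c3) p * b p = 0 := hxD
    have key1 : ∀ e ∈ C₁, ∑ t, c1 t * e t = 0 := by
      intro e he
      have hb : Stmt19Aux.phi3 ((0 : Fin n → ZMod 2), e, (0 : Fin n → ZMod 2)) ∈
          matrixProductCode (!![1,0,1; 1,1,0; 1,1,1] :
            Matrix (Fin 3) (Fin 3) (ZMod 2)) ![C₁, C₁, C₂] := by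
        rw [hmpc]
        exact ⟨(0, e, 0), by simp [Submodule.mem_prod, he], rfl⟩
      have h := hD _ hb
      rw [Stmt19Aux.phi3_inner] at h
      simpa using h
    have key2 : ∀ e ∈ C₁, ∑ t, c2 t * e t = 0 := by
      intro e he
      have hb : Stmt19Aux.phi3 (e, (0 : Fin n → ZMod 2), (0 : Fin n → ZMod 2)) ∈
          matrixProductCode (!![1,0,1; 1,1,0; 1,1,1] :
            Matrix (Fin 3) (Fin 3) (ZMod 2)) ![C₁, C₁, C₂] := by
        rw [hmpc]
        exact ⟨(e, 0, 0), by simp [Submodule.mem_prod, he], rfl⟩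
      have h := hD _ hb
      rw [Stmt19Aux.phi3_inner] at h
      simpa using h
    have key3 : ∀ e ∈ C₂, ∑ t, c3 t * e t = 0 := by
      intro e he
      have hb : Stmt19Aux.phi3 ((0 : Fin n → ZMod 2), (0 : Fin n → ZMod 2), e) ∈
          matrixProductCode (!![1,0,1; 1,1,0; 1,1,1] :
            Matrix (Fin 3) (Fin 3) (ZMod 2)) ![C₁, C₁, C₂] := by
        rw [hmpc]
        exact ⟨(0, 0, e), by simp [Submodule.mem_prod, he], rfl⟩
      have h := hD _ hb
      rw [Stmt19Aux.phi3_inner] at h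
      simpa using h
    have hc1 : c1 = 0 := by
      have hm : c1 ∈ C₁ ⊓ dualCode C₁ := Submodule.mem_inf.mpr ⟨hcP.1, key1⟩
      rw [hLCD₁] at hm
      exact (Submodule.mem_bot _).mp hm
    have hc2 : c2 = 0 := by
      have hm : c2 ∈ C₁ ⊓ dualCode C₁ := Submodule.mem_inf.mpr ⟨hcP.2.1, key2⟩
      rw [hLCD₁] at hm
      exact (Submodule.mem_bot _).mp hm
    have hc3 : c3 = 0 := by
      have hm : c3 ∈ C₂ ⊓ dualCode C₂ := Submodule.mem_inf.mpr ⟨hcP.2.2, key3⟩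
      rw [hLCD₂] at hm
      exact (Submodule.mem_bot _).mp hm
    subst hc1; subst hc2; subst hc3
    exact (Submodule.mem_bot _).mpr (map_zero (Stmt19Aux.phi3 (n := n)))
  · -- finrank
    rw [hmpc,
      ← (Submodule.equivMapOfInjective _ Stmt19Aux.phi3_inj _).finrank_eq,
      (Stmt19Aux.prodEquivSub C₁ (C₁.prod C₂)).finrank_eq, Module.finrank_prod,
      (Stmt19Aux.prodEquivSub C₁ C₂).finrank_eq, Module.finrank_prod, hk₁, hk₂]
    ring
  · -- min distance
    have hd1le : ∀ c, c ∈ C₁ → c ≠ 0 → d₁ ≤ hammingNorm c := fun c hc h0 =>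
      hd₁ ▸ Nat.sInf_le ⟨c, hc, h0, rfl⟩
    have hd2le : ∀ c, c ∈ C₂ → c ≠ 0 → d₂ ≤ hammingNorm c := fun c hc h0 =>
      hd₂ ▸ Nat.sInf_le ⟨c, hc, h0, rfl⟩
    refine le_csInf ?_ ?_
    · obtain ⟨c1, hc1, hc1ne⟩ := Submodule.ne_bot_iff C₁ |>.mp hC₁
      refine ⟨hammingNorm (Stmt19Aux.phi3 (c1, 0, 0)),
        Stmt19Aux.phi3 (c1, 0, 0), ?_, ?_, rfl⟩
      · rw [hmpc]
        exact ⟨(c1, 0, 0), by simp [Submodule.mem_prod, hc1], rfl⟩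
      · intro h
        apply hc1ne
        have h0 : ((c1, 0, 0) : (Fin n → ZMod 2) × (Fin n → ZMod 2) × (Fin n → ZMod 2)) = 0 :=
          Stmt19Aux.phi3_inj (by rw [h, map_zero])
        exact congrArg Prod.fst h0
    · rintro d ⟨x, hxC, hxne, rfl⟩
      rw [hmpc] at hxC
      obtain ⟨⟨c1, c2, c3⟩, hcP, rfl⟩ := hxC
      have hwt := Stmt19Aux.wt_split (Stmt19Aux.phi3 (c1, c2, c3))
      rw [Stmt19Aux.phi3_block0, Stmt19Aux.phi3_block1, Stmt19Aux.phi3_block2] at hwt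
      dsimp only at hwt
      by_cases h3 : c3 = 0
      · subst h3
        simp only [add_zero] at hwt
        by_cases h1 : c1 = 0
        · subst h1
          have h2 : c2 ≠ 0 := by
            rintro rfl
            exact hxne (map_zero _)
          simp only [zero_add, hammingNorm_zero] at hwt
          have hb := hd1le c2 hcP.2.1 h2
          have hmin := min_le_left (2 * d₁) d₂
          omega
        · by_cases h2 : c2 = 0
          · subst h2
            simp only [add_zero, hammingNorm_zero] at hwt
            have ha := hd1le c1 hcP.1 h1
            have hmin := min_le_left (2 * d₁) d₂
            omega
          · have ha := hd1le c1 hcP.1 h1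
            have hb := hd1le c2 hcP.2.1 h2
            have hmin := min_le_left (2 * d₁) d₂
            omega
      · have key : c3 = (c1 + c2 + c3) + ((c2 + c3) + (c1 + c3)) := by
          funext t
          simp only [Pi.add_apply]
          exact Stmt19Aux.char2sum _ _ _
        have hle1 : hammingNorm c3
            ≤ hammingNorm (c1 + c2 + c3) + hammingNorm ((c2 + c3) + (c1 + c3)) := by
          conv_lhs => rw [key]
          exact Stmt19Aux.wt_add_le _ _
        have hle2 := Stmt19Aux.wt_add_le (c2 + c3) (c1 + c3)
        have hc := hd2le c3 hcP.2.2 h3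
        have hmin := min_le_right (2 * d₁) d₂
        omega
end
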